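/- arXiv:1204.6302 — 6 statements merged into one kernel-verified Lean document; each statement's English description precedes it below -/
import Mathlib

section
/- Let A be an n×n nonnegative real matrix whose row sums r_1(A),…,r_n(A) are all nonzero. Then for any integers L > 0 and k ≥ 0, min_{1≤i≤n} ( r_i(A^{k+L}) / r_i(A^k) )^{1/L} ≤ ρ(A) ≤ max_{1≤i≤n} ( r_i(A^{k+L}) / r_i(A^k) )^{1/L}. -/
open Matrix

/-- The spectral radius of a real square matrix: the maximum modulus of its
complex eigenvalues (elements of the spectrum of the matrix over `ℂ`). -/
noncomputable def specRad {n : ℕ} (A : Matrix (Fin n) (Fin n) ℝ) : ℝ :=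
  sSup ((fun μ : ℂ => ‖μ‖) '' spectrum ℂ (A.map (fun x : ℝ => (x : ℂ))))

/-- `rowSum A i` is the `i`-th row sum of `A`. -/
noncomputable def rowSum {n : ℕ} (A : Matrix (Fin n) (Fin n) ℝ) (i : Fin n) : ℝ :=
  ∑ j, A i j

/-- A square matrix is irreducible if it cannot be symmetrically permuted to a
nontrivial block upper-triangular form; equivalently, for every nonempty proper
subset `S` of indices there is a nonzero entry leading from `S` to its complement. -/
def IsIrred {n : ℕ} (A : Matrix (Fin n) (Fin n) ℝ) : Prop :=
  ∀ S : Set (Fin n), S.Nonempty → S ≠ Set.univ → ∃ i ∈ S, ∃ j ∈ Sᶜ, A i j ≠ 0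

attribute [local instance] Matrix.linftyOpNormedRing Matrix.linftyOpNormedAlgebra

open scoped ENNReal NNReal

section Aux

variable {n : ℕ}

lemma pow_entry_nonneg (A : Matrix (Fin n) (Fin n) ℝ) (hA : ∀ i j, 0 ≤ A i j) :
    ∀ (p : ℕ) (i j : Fin n), 0 ≤ (A ^ p) i j := by
  intro p
  induction p with
  | zero =>
    intro i j
    rw [pow_zero]
    by_cases h : i = j <;> simp [Matrix.one_apply, h]
  | succ p ih =>
    intro i j
    rw [pow_succ, Matrix.mul_apply]
    exact Finset.sum_nonneg fun m _ => mul_nonneg (ih i m) (hA m j)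

lemma rowSum_conv (A : Matrix (Fin n) (Fin n) ℝ) (p q : ℕ) (i : Fin n) :
    rowSum (A ^ (p + q)) i = ∑ j, (A ^ p) i j * rowSum (A ^ q) j := by
  unfold rowSum
  rw [pow_add]
  simp_rw [Matrix.mul_apply, Finset.mul_sum]
  exact Finset.sum_comm

lemma rowSum_pow_pos (A : Matrix (Fin n) (Fin n) ℝ) (hA : ∀ i j, 0 ≤ A i j)
    (hr : ∀ i, rowSum A i ≠ 0) : ∀ (p : ℕ) (i : Fin n), 0 < rowSum (A ^ p) i := by
  intro p
  induction p with
  | zero =>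
    intro i
    simp [rowSum, Matrix.one_apply]
  | succ p ih =>
    intro i
    have hex : ∃ j, 0 < A i j := by
      by_contra hc
      push_neg at hc
      exact hr i (Finset.sum_eq_zero fun j _ => le_antisymm (hc j) (hA i j))
    obtain ⟨j₀, hj₀⟩ := hex
    have h1 : rowSum (A ^ (1 + p)) i = ∑ j, (A ^ 1) i j * rowSum (A ^ p) j :=
      rowSum_conv A 1 p i
    rw [show p + 1 = 1 + p from by omega, h1, pow_one]
    refine Finset.sum_pos' (fun j _ => mul_nonneg (hA i j) (ih j).le) ?_
    exact ⟨j₀, Finset.mem_univ j₀, mul_pos hj₀ (ih j₀)⟩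

end Aux

open scoped Topology in
set_option maxHeartbeats 1600000 in
/-- Theorem 4 of the paper, inequality part — Liu's bound.
For a nonnegative matrix `A` with all row sums nonzero and integers `L > 0`, `k ≥ 0`,
`min_i (r_i(A^{k+L})/r_i(A^k))^{1/L} ≤ ρ(A) ≤ max_i (r_i(A^{k+L})/r_i(A^k))^{1/L}`. -/
theorem stmt3 {n : ℕ} [NeZero n] (A : Matrix (Fin n) (Fin n) ℝ)
    (hA : ∀ i j, 0 ≤ A i j) (hr : ∀ i, rowSum A i ≠ 0) (L k : ℕ) (hL : 0 < L) :
    Finset.univ.inf' Finset.univ_nonempty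
        (fun i => (rowSum (A ^ (k + L)) i / rowSum (A ^ k) i) ^ ((L : ℝ))⁻¹) ≤ specRad A ∧
    specRad A ≤ Finset.univ.sup' Finset.univ_nonempty
        (fun i => (rowSum (A ^ (k + L)) i / rowSum (A ^ k) i) ^ ((L : ℝ))⁻¹) := by
  classical
  haveI : Nonempty (Fin n) := Fin.pos_iff_nonempty.mp (Nat.pos_of_ne_zero (NeZero.ne n))
  haveI : CompleteSpace (Matrix (Fin n) (Fin n) ℂ) := FiniteDimensional.complete ℂ _
  haveI : NormOneClass (Matrix (Fin n) (Fin n) ℂ) :=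
    ⟨by rw [show (1 : Matrix (Fin n) (Fin n) ℂ) = diagonal 1 from (Matrix.diagonal_one).symm,
      Matrix.linfty_opNorm_diagonal]; exact norm_one⟩
  -- basic positivity
  set x : Fin n → ℝ := fun i => rowSum (A ^ k) i with hxdef
  have hx : ∀ i, 0 < x i := fun i => rowSum_pow_pos A hA hr k i
  set ratio : Fin n → ℝ := fun i => (x i)⁻¹ * rowSum (A ^ (L + k)) i with hratiodef
  have hratio_pos : ∀ i, 0 < ratio i :=
    fun i => mul_pos (inv_pos.mpr (hx i)) (rowSum_pow_pos A hA hr (L + k) i)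
  have hratio_eq : ∀ i, rowSum (A ^ (k + L)) i / rowSum (A ^ k) i = ratio i := by
    intro i
    rw [hratiodef]
    rw [add_comm k L, div_eq_inv_mul]
  obtain ⟨i₁, -, hi₁⟩ := Finset.exists_mem_eq_inf' (Finset.univ_nonempty (α := Fin n)) ratio
  obtain ⟨i₂, -, hi₂⟩ := Finset.exists_mem_eq_sup' (Finset.univ_nonempty (α := Fin n)) ratio
  set mn : ℝ := ratio i₁ with hmndef
  set Mx : ℝ := ratio i₂ with hMxdef
  have hmn_le : ∀ i, mn ≤ ratio i := fun i => hi₁ ▸ Finset.inf'_le ratio (Finset.mem_univ i)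
  have hMx_ge : ∀ i, ratio i ≤ Mx := fun i => hi₂ ▸ Finset.le_sup' ratio (Finset.mem_univ i)
  have hmn_pos : 0 < mn := hratio_pos i₁
  have hMx_pos : 0 < Mx := hratio_pos i₂
  -- the complexified matrix and the diagonal conjugation
  set A' : Matrix (Fin n) (Fin n) ℂ := A.map (fun t : ℝ => (t : ℂ)) with hA'def
  have hmapow : ∀ q : ℕ, A' ^ q = (A ^ q).map (fun t : ℝ => (t : ℂ)) := by
    intro q
    have h1 : A' = Complex.ofRealHom.mapMatrix A := rfl
    have h2 : (Complex.ofRealHom.mapMatrix (A ^ q) : Matrix (Fin n) (Fin n) ℂ)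
        = (A ^ q).map (fun t : ℝ => (t : ℂ)) := rfl
    rw [h1, ← map_pow, h2]
  have hxc : ∀ i, (x i : ℂ) ≠ 0 := fun i => Complex.ofReal_ne_zero.mpr (hx i).ne'
  set u : (Matrix (Fin n) (Fin n) ℂ)ˣ :=
    ⟨diagonal fun i => (x i : ℂ), diagonal fun i => ((x i : ℂ))⁻¹,
      by
        rw [diagonal_mul_diagonal]
        ext i j
        rcases eq_or_ne i j with h | h
        · subst h; simp [mul_inv_cancel₀ (hxc i)]
        · simp [Matrix.diagonal_apply_ne _ h, Matrix.one_apply_ne h],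
      by
        rw [diagonal_mul_diagonal]
        ext i j
        rcases eq_or_ne i j with h | h
        · subst h; simp [inv_mul_cancel₀ (hxc i)]
        · simp [Matrix.diagonal_apply_ne _ h, Matrix.one_apply_ne h]⟩ with hudef
  set C : Matrix (Fin n) (Fin n) ℂ :=
    ((u⁻¹ : (Matrix (Fin n) (Fin n) ℂ)ˣ) : Matrix (Fin n) (Fin n) ℂ) * A' *
      ((u : (Matrix (Fin n) (Fin n) ℂ)ˣ) : Matrix (Fin n) (Fin n) ℂ) with hCdef
  have hCspec : spectrum ℂ C = spectrum ℂ A' := spectrum.units_conjugate'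
  have hCpow : ∀ q : ℕ, C ^ q =
      ((u⁻¹ : (Matrix (Fin n) (Fin n) ℂ)ˣ) : Matrix (Fin n) (Fin n) ℂ) * A' ^ q *
        ((u : (Matrix (Fin n) (Fin n) ℂ)ˣ) : Matrix (Fin n) (Fin n) ℂ) :=
    fun q => Units.conj_pow' u A' q
  -- entries and row sums of powers of C
  have hCentry : ∀ (q : ℕ) (i j : Fin n),
      (C ^ q) i j = ((((x i)⁻¹ * (A ^ q) i j * x j : ℝ)) : ℂ) := by
    intro q i j
    rw [hCpow q, hmapow q]
    have hu : (↑u : Matrix (Fin n) (Fin n) ℂ) = diagonal fun i => (x i : ℂ) := rfl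
    have hui : (↑u⁻¹ : Matrix (Fin n) (Fin n) ℂ) = diagonal fun i => ((x i : ℂ))⁻¹ := rfl
    rw [hu, hui, mul_assoc, Matrix.diagonal_mul, Matrix.mul_diagonal, Matrix.map_apply]
    push_cast
    ring
  have hCnorm_row : ∀ (q : ℕ) (i : Fin n),
      ∑ j, ‖(C ^ q) i j‖ = (x i)⁻¹ * rowSum (A ^ (q + k)) i := by
    intro q i
    have h1 : ∀ j, ‖(C ^ q) i j‖ = (x i)⁻¹ * ((A ^ q) i j * x j) := by
      intro j
      have hnn : 0 ≤ (x i)⁻¹ * (A ^ q) i j * x j :=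
        mul_nonneg (mul_nonneg (inv_pos.mpr (hx i)).le (pow_entry_nonneg A hA q i j))
          (hx j).le
      rw [hCentry q i j, Complex.norm_real, Real.norm_eq_abs, abs_of_nonneg hnn, mul_assoc]
    rw [Finset.sum_congr rfl fun j _ => h1 j, ← Finset.mul_sum, rowSum_conv A q k i]
  -- norm bounds for powers of C
  have hnorm_le : ∀ (q : ℕ) (c : ℝ), 0 ≤ c →
      (∀ i, (x i)⁻¹ * rowSum (A ^ (q + k)) i ≤ c) → ‖C ^ q‖ ≤ c := by
    intro q c hc h
    rw [Matrix.linfty_opNorm_def]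
    rw [← Real.coe_toNNReal c hc, NNReal.coe_le_coe]
    refine Finset.sup_le fun i _ => ?_
    rw [← NNReal.coe_le_coe, Real.coe_toNNReal c hc, NNReal.coe_sum]
    simp only [coe_nnnorm]
    rw [hCnorm_row q i]
    exact h i
  have hnorm_ge : ∀ (q : ℕ) (i : Fin n), (x i)⁻¹ * rowSum (A ^ (q + k)) i ≤ ‖C ^ q‖ := by
    intro q i
    rw [Matrix.linfty_opNorm_def, ← hCnorm_row q i]
    have h1 : ∑ j, ‖(C ^ q) i j‖ = ((∑ j, ‖(C ^ q) i j‖₊ : ℝ≥0) : ℝ) := by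
      rw [NNReal.coe_sum]; simp only [coe_nnnorm]
    rw [h1]
    exact NNReal.coe_le_coe.mpr (Finset.le_sup (f := fun i => ∑ j, ‖(C ^ q) i j‖₊) (Finset.mem_univ i))
  -- the spectral radius witness
  have hnetriv : (0 : Matrix (Fin n) (Fin n) ℂ) ≠ 1 := by
    intro h
    have h1 := congrFun (congrFun h i₁) i₁
    simp [Matrix.one_apply] at h1
  haveI : Nontrivial (Matrix (Fin n) (Fin n) ℂ) := ⟨⟨0, 1, hnetriv⟩⟩
  have hSne : (spectrum ℂ A').Nonempty := spectrum.nonempty A'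
  have hScpt : IsCompact (spectrum ℂ A') := spectrum.isCompact A'
  have hIne : ((fun μ : ℂ => ‖μ‖) '' spectrum ℂ A').Nonempty := hSne.image _
  have hIcpt : IsCompact ((fun μ : ℂ => ‖μ‖) '' spectrum ℂ A') :=
    hScpt.image continuous_norm
  have hspecRad : specRad A = sSup ((fun μ : ℂ => ‖μ‖) '' spectrum ℂ A') := rfl
  obtain ⟨μ₀, hμ₀mem, hμ₀abs⟩ : ∃ μ₀ ∈ spectrum ℂ A', ‖μ₀‖ = specRad A := by
    have := hIcpt.sSup_mem hIne
    rw [← hspecRad] at this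
    obtain ⟨μ₀, hm, he⟩ := this
    exact ⟨μ₀, hm, he⟩
  have hub : ∀ ν ∈ spectrum ℂ A', ‖ν‖ ≤ specRad A := by
    intro ν hν
    rw [hspecRad]
    exact le_csSup hIcpt.bddAbove ⟨ν, hν, rfl⟩
  have hρ0 : 0 ≤ specRad A := hμ₀abs ▸ norm_nonneg _
  have hLR : ((L : ℝ)) ≠ 0 := Nat.cast_ne_zero.mpr hL.ne'
  -- upper bound
  have hupper : specRad A ≤ Mx ^ ((L : ℝ))⁻¹ := by
    have hpowmem : μ₀ ^ L ∈ spectrum ℂ (A' ^ L) :=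
      spectrum.pow_image_subset A' L ⟨μ₀, hμ₀mem, rfl⟩
    have hpowmem' : μ₀ ^ L ∈ spectrum ℂ (C ^ L) := by
      rw [hCpow L, spectrum.units_conjugate']
      exact hpowmem
    have hnle : ‖μ₀ ^ L‖ ≤ ‖C ^ L‖ := spectrum.norm_le_norm_of_mem hpowmem'
    have hCLle : ‖C ^ L‖ ≤ Mx := by
      refine hnorm_le L Mx hMx_pos.le fun i => ?_
      exact hMx_ge i
    have hkey : specRad A ^ L ≤ Mx := by
      calc specRad A ^ L = ‖μ₀‖ ^ L := by rw [hμ₀abs]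
        _ = ‖μ₀ ^ L‖ := by rw [norm_pow]
        _ ≤ ‖C ^ L‖ := hnle
        _ ≤ Mx := hCLle
    calc specRad A = (specRad A ^ L) ^ ((L : ℝ))⁻¹ := by
          rw [← Real.rpow_natCast (specRad A) L, ← Real.rpow_mul hρ0,
            mul_inv_cancel₀ hLR, Real.rpow_one]
      _ ≤ Mx ^ ((L : ℝ))⁻¹ :=
          Real.rpow_le_rpow (pow_nonneg hρ0 L) hkey (inv_nonneg.mpr (Nat.cast_nonneg L))
  -- lower bound: iterate
  have hmono : ∀ (p : ℕ) (i : Fin n), mn ^ p * x i ≤ rowSum (A ^ (p * L + k)) i := by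
    intro p
    induction p with
    | zero =>
      intro i
      simp only [pow_zero, one_mul, zero_mul, zero_add]
      exact le_of_eq rfl
    | succ p ih =>
      intro i
      have h1 : rowSum (A ^ ((p + 1) * L + k)) i
          = ∑ j, (A ^ L) i j * rowSum (A ^ (p * L + k)) j := by
        rw [show (p + 1) * L + k = L + (p * L + k) from by ring]
        exact rowSum_conv A L (p * L + k) i
      have h2 : ∑ j, (A ^ L) i j * (mn ^ p * x j)
          ≤ ∑ j, (A ^ L) i j * rowSum (A ^ (p * L + k)) j :=
        Finset.sum_le_sum fun j _ =>
          mul_le_mul_of_nonneg_left (ih j) (pow_entry_nonneg A hA L i j)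
      have h3 : ∑ j, (A ^ L) i j * (mn ^ p * x j)
          = mn ^ p * rowSum (A ^ (L + k)) i := by
        rw [rowSum_conv A L k i, Finset.mul_sum]
        exact Finset.sum_congr rfl fun j _ => by ring
      have h4 : rowSum (A ^ (L + k)) i = ratio i * x i := by
        rw [hratiodef]
        field_simp
        rw [mul_div_assoc, div_self (hx i).ne', mul_one]
      have h5 : mn ^ (p + 1) * x i ≤ mn ^ p * (ratio i * x i) := by
        have := mul_le_mul_of_nonneg_left
          (mul_le_mul_of_nonneg_right (hmn_le i) (hx i).le) (pow_nonneg hmn_pos.le p)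
        calc mn ^ (p + 1) * x i = mn ^ p * (mn * x i) := by ring
          _ ≤ mn ^ p * (ratio i * x i) := this
      calc mn ^ (p + 1) * x i ≤ mn ^ p * (ratio i * x i) := h5
        _ = mn ^ p * rowSum (A ^ (L + k)) i := by rw [h4]
        _ = ∑ j, (A ^ L) i j * (mn ^ p * x j) := h3.symm
        _ ≤ ∑ j, (A ^ L) i j * rowSum (A ^ (p * L + k)) j := h2
        _ = rowSum (A ^ ((p + 1) * L + k)) i := h1.symm
  have hCp : ∀ p : ℕ, mn ^ p ≤ ‖C ^ (p * L)‖ := by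
    intro p
    have h1 : mn ^ p ≤ (x i₁)⁻¹ * rowSum (A ^ (p * L + k)) i₁ := by
      have := mul_le_mul_of_nonneg_left (hmono p i₁) (inv_pos.mpr (hx i₁)).le
      calc mn ^ p = (x i₁)⁻¹ * (mn ^ p * x i₁) := by
            field_simp
            rw [div_self (hx i₁).ne']
        _ ≤ (x i₁)⁻¹ * rowSum (A ^ (p * L + k)) i₁ := this
    exact h1.trans (hnorm_ge (p * L) i₁)
  -- Gelfand's formula along the subsequence p * L
  have hgel := spectrum.pow_nnnorm_pow_one_div_tendsto_nhds_spectralRadius C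
  have hmulL : Filter.Tendsto (fun p : ℕ => p * L) Filter.atTop Filter.atTop :=
    Filter.tendsto_atTop_mono (fun p => Nat.le_mul_of_pos_right p hL) Filter.tendsto_id
  have hsub : Filter.Tendsto
      (fun p : ℕ => (‖C ^ (p * L)‖₊ : ℝ≥0∞) ^ (1 / ((p * L : ℕ) : ℝ)))
      Filter.atTop (𝓝 (spectralRadius ℂ C)) := hgel.comp hmulL
  have hkey : ENNReal.ofReal (mn ^ ((L : ℝ))⁻¹) ≤ spectralRadius ℂ C := by
    refine ge_of_tendsto hsub ?_
    filter_upwards [Filter.eventually_ge_atTop 1] with p hp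
    have hp0 : ((p : ℝ)) ≠ 0 := Nat.cast_ne_zero.mpr (by omega)
    have hexp : ((L : ℝ))⁻¹ = (p : ℝ) * (1 / ((p * L : ℕ) : ℝ)) := by
      push_cast
      field_simp
    calc ENNReal.ofReal (mn ^ ((L : ℝ))⁻¹)
        = ENNReal.ofReal mn ^ ((L : ℝ))⁻¹ :=
          (ENNReal.ofReal_rpow_of_nonneg hmn_pos.le (inv_nonneg.mpr (Nat.cast_nonneg L))).symm
      _ = (ENNReal.ofReal mn ^ (p : ℝ)) ^ (1 / ((p * L : ℕ) : ℝ)) := by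
          rw [hexp, ENNReal.rpow_mul]
      _ = (ENNReal.ofReal (mn ^ p)) ^ (1 / ((p * L : ℕ) : ℝ)) := by
          rw [ENNReal.rpow_natCast, ENNReal.ofReal_pow hmn_pos.le]
      _ ≤ ((‖C ^ (p * L)‖₊ : ℝ≥0∞)) ^ (1 / ((p * L : ℕ) : ℝ)) := by
          refine ENNReal.rpow_le_rpow ?_ (by positivity)
          rw [← ENNReal.ofReal_coe_nnreal, coe_nnnorm]
          exact ENNReal.ofReal_le_ofReal (hCp p)
  have hCsr : spectralRadius ℂ C = spectralRadius ℂ A' := by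
    unfold spectralRadius
    rw [hCspec]
  have hsrle : spectralRadius ℂ A' ≤ ((‖μ₀‖₊ : ℝ≥0) : ℝ≥0∞) := by
    refine iSup₂_le fun ν hν => ?_
    refine ENNReal.coe_le_coe.mpr ?_
    have : ‖ν‖ ≤ ‖μ₀‖ := by
      rw [hμ₀abs]
      exact hub ν hν
    exact this
  have hlower : mn ^ ((L : ℝ))⁻¹ ≤ specRad A := by
    have h1 : ENNReal.ofReal (mn ^ ((L : ℝ))⁻¹) ≤ ENNReal.ofReal (specRad A) := by
      calc ENNReal.ofReal (mn ^ ((L : ℝ))⁻¹) ≤ spectralRadius ℂ C := hkey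
        _ = spectralRadius ℂ A' := hCsr
        _ ≤ ((‖μ₀‖₊ : ℝ≥0) : ℝ≥0∞) := hsrle
        _ = ENNReal.ofReal (specRad A) := by
            rw [← ENNReal.ofReal_coe_nnreal, coe_nnnorm, hμ₀abs]
    exact (ENNReal.ofReal_le_ofReal_iff hρ0).mp h1
  constructor
  · refine le_trans (Finset.inf'_le _ (Finset.mem_univ i₁)) ?_
    rw [hratio_eq i₁]
    exact hlower
  · refine le_trans hupper ?_
    have : Mx ^ ((L : ℝ))⁻¹
        = (rowSum (A ^ (k + L)) i₂ / rowSum (A ^ k) i₂) ^ ((L : ℝ))⁻¹ := by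
      rw [hratio_eq i₂]
    rw [this]
    exact Finset.le_sup'
      (f := fun i => (rowSum (A ^ (k + L)) i / rowSum (A ^ k) i) ^ ((L : ℝ))⁻¹)
      (Finset.mem_univ i₂)
end

section
/- Let A be an n×n nonnegative real matrix with all row sums nonzero, and let L > 0, k ≥ 0 be integers such that A^L is irreducible. Then equality holds in either side (and hence both sides) of min_i (r_i(A^{k+L})/r_i(A^k))^{1/L} ≤ ρ(A) ≤ max_i (r_i(A^{k+L})/r_i(A^k))^{1/L} if and only if the vector x = (r_1(A^k),…,r_n(A^k))ᵀ is an eigenvector of A. -/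
open Matrix

namespace PFaux

open Filter Topology NNReal ENNReal

variable {n : ℕ}

lemma mulVec_nonneg {C : Matrix (Fin n) (Fin n) ℝ} (hC : ∀ i j, 0 ≤ C i j)
    {v : Fin n → ℝ} (hv : ∀ i, 0 ≤ v i) : ∀ i, 0 ≤ C.mulVec v i := fun i => by
  simp only [Matrix.mulVec, dotProduct]
  exact Finset.sum_nonneg fun j _ => mul_nonneg (hC i j) (hv j)

lemma pow_nonneg' {C : Matrix (Fin n) (Fin n) ℝ} (hC : ∀ i j, 0 ≤ C i j) (p : ℕ) :
    ∀ i j, 0 ≤ (C ^ p) i j := by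
  induction p with
  | zero => intro i j; by_cases h : i = j <;> simp [h, Matrix.one_apply]
  | succ p ih =>
    intro i j
    rw [pow_succ, Matrix.mul_apply]
    exact Finset.sum_nonneg fun t _ => mul_nonneg (ih i t) (hC t j)

lemma mulVec_mono {C : Matrix (Fin n) (Fin n) ℝ} (hC : ∀ i j, 0 ≤ C i j)
    {u v : Fin n → ℝ} (huv : ∀ i, u i ≤ v i) : ∀ i, C.mulVec u i ≤ C.mulVec v i := fun i => by
  simp only [Matrix.mulVec, dotProduct]
  exact Finset.sum_le_sum fun j _ => mul_le_mul_of_nonneg_left (huv j) (hC i j)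

lemma rowSum_mul (B C : Matrix (Fin n) (Fin n) ℝ) (i : Fin n) :
    rowSum (B * C) i = B.mulVec (fun j => rowSum C j) i := by
  simp only [rowSum, Matrix.mulVec, Matrix.mul_apply, dotProduct]
  rw [Finset.sum_comm]
  simp [Finset.mul_sum]

lemma rowSum_pow_pos {A : Matrix (Fin n) (Fin n) ℝ} (hA : ∀ i j, 0 ≤ A i j)
    (hr : ∀ i, rowSum A i ≠ 0) (p : ℕ) : ∀ i, 0 < rowSum (A ^ p) i := by
  induction p with
  | zero => intro i; simp [rowSum, Matrix.one_apply]
  | succ p ih =>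
    intro i
    rw [pow_succ', rowSum_mul]
    have h1 : ∃ j, 0 < A i j := by
      by_contra h
      push_neg at h
      exact hr i (le_antisymm (Finset.sum_nonpos fun j _ => h j)
        (Finset.sum_nonneg fun j _ => hA i j))
    obtain ⟨j0, hj0⟩ := h1
    have : 0 < A i j0 * rowSum (A ^ p) j0 := mul_pos hj0 (ih j0)
    simp only [Matrix.mulVec, dotProduct]
    refine Finset.sum_pos' (fun j _ => mul_nonneg (hA i j) (ih j).le)
      ⟨j0, Finset.mem_univ _, this⟩

lemma mem_spectrum_iff {M : Matrix (Fin n) (Fin n) ℂ} {μ : ℂ} :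
    μ ∈ spectrum ℂ M ↔ ∃ v, v ≠ 0 ∧ M.mulVec v = μ • v := by
  rw [← AlgEquiv.spectrum_eq (Matrix.toLinAlgEquiv' : Matrix (Fin n) (Fin n) ℂ ≃ₐ[ℂ] _) M,
    ← Module.End.hasEigenvalue_iff_mem_spectrum]
  constructor
  · intro h
    obtain ⟨v, hv⟩ := h.exists_hasEigenvector
    exact ⟨v, hv.2, by rw [← Matrix.toLin'_apply M v, ← hv.apply_eq_smul]; rfl⟩
  · rintro ⟨v, hv0, hv⟩
    refine Module.End.hasEigenvalue_of_hasEigenvector ⟨Module.End.mem_eigenspace_iff.mpr ?_, hv0⟩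
    show Matrix.toLin' M v = μ • v
    rw [Matrix.toLin'_apply, hv]

/-- map to ℂ of a real matrix -/
noncomputable def cx (A : Matrix (Fin n) (Fin n) ℝ) : Matrix (Fin n) (Fin n) ℂ :=
  A.map (fun x : ℝ => (x : ℂ))

lemma cx_pow (A : Matrix (Fin n) (Fin n) ℝ) (p : ℕ) : cx (A ^ p) = (cx A) ^ p := by
  induction p with
  | zero => ext i j; simp [cx, Matrix.one_apply]; split <;> simp
  | succ p ih =>
    rw [pow_succ, pow_succ, ← ih]
    ext i j
    simp [cx, Matrix.mul_apply]

lemma spec_nonempty [NeZero n] (A : Matrix (Fin n) (Fin n) ℝ) :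
    (spectrum ℂ (cx A)).Nonempty := by
  have : Nonempty (Fin n) := ⟨⟨0, Nat.pos_of_ne_zero (NeZero.ne n)⟩⟩
  exact spectrum.nonempty_of_isAlgClosed_of_finiteDimensional ℂ (cx A)

lemma spec_finite (A : Matrix (Fin n) (Fin n) ℝ) :
    ((fun μ : ℂ => ‖μ‖) '' spectrum ℂ (cx A)).Finite :=
  (Matrix.finite_spectrum (cx A)).image _

lemma abs_le_specRad [NeZero n] {A : Matrix (Fin n) (Fin n) ℝ} {μ : ℂ}
    (hμ : μ ∈ spectrum ℂ (cx A)) : ‖μ‖ ≤ specRad A :=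
  le_csSup (Set.Finite.bddAbove (spec_finite A)) ⟨μ, hμ, rfl⟩

lemma specRad_mem [NeZero n] (A : Matrix (Fin n) (Fin n) ℝ) :
    specRad A ∈ (fun μ : ℂ => ‖μ‖) '' spectrum ℂ (cx A) :=
  Set.Nonempty.csSup_mem ((spec_nonempty A).image _) (spec_finite A)

lemma specRad_nonneg [NeZero n] (A : Matrix (Fin n) (Fin n) ℝ) : 0 ≤ specRad A := by
  obtain ⟨μ, _, h⟩ := specRad_mem A
  rw [← h]; exact norm_nonneg μ

lemma specRad_le [NeZero n] {A : Matrix (Fin n) (Fin n) ℝ} {M : ℝ}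
    (h : ∀ μ ∈ spectrum ℂ (cx A), ‖μ‖ ≤ M) : specRad A ≤ M :=
  csSup_le ((spec_nonempty A).image _) (by rintro y ⟨μ, hμ, rfl⟩; exact h μ hμ)

/-- real eigenvector gives complex spectrum membership -/
lemma mem_spectrum_of_real {A : Matrix (Fin n) (Fin n) ℝ} {x : Fin n → ℝ} {μ : ℝ}
    (hx : x ≠ 0) (h : A.mulVec x = μ • x) : (μ : ℂ) ∈ spectrum ℂ (cx A) := by
  rw [← AlgEquiv.spectrum_eq (Matrix.toLinAlgEquiv' : Matrix (Fin n) (Fin n) ℂ ≃ₐ[ℂ] _),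
    ← Module.End.hasEigenvalue_iff_mem_spectrum]
  refine Module.End.hasEigenvalue_of_hasEigenvector (x := fun i => (x i : ℂ))
    ⟨Module.End.mem_eigenspace_iff.mpr ?_, ?_⟩
  · show (cx A).mulVec _ = _
    ext i
    have := congrFun h i
    simp only [Matrix.mulVec, dotProduct, Pi.smul_apply, smul_eq_mul] at this ⊢
    simp only [cx, Matrix.map_apply]
    rw [show ∑ j, ((A i j : ℝ) : ℂ) * (x j : ℂ) = ((∑ j, A i j * x j : ℝ) : ℂ) by
        push_cast; ring_nf, this]
    push_cast; ring
  · intro hc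
    apply hx
    ext i
    have := congrFun hc i
    simpa using this

lemma upper [NeZero n] {C : Matrix (Fin n) (Fin n) ℝ} (hC : ∀ i j, 0 ≤ C i j) {x : Fin n → ℝ}
    (hx : ∀ i, 0 < x i) {M : ℝ} (h : ∀ i, C.mulVec x i ≤ M * x i) {μ : ℂ}
    (hμ : μ ∈ spectrum ℂ (cx C)) : ‖μ‖ ≤ M := by
  obtain ⟨v, hv0, hv⟩ := mem_spectrum_iff.mp hμ
  obtain ⟨i0, -, hi0⟩ := Finset.exists_mem_eq_sup' (Finset.univ_nonempty (α := Fin n))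
    (fun i => ‖v i‖ / x i)
  set c : ℝ := ‖v i0‖ / x i0 with hc
  have hub : ∀ j, ‖v j‖ ≤ c * x j := by
    intro j
    have : ‖v j‖ / x j ≤ c :=
      hi0 ▸ Finset.le_sup' (fun i => ‖v i‖ / x i) (Finset.mem_univ j)
    calc ‖v j‖ = (‖v j‖ / x j) * x j := by
          rw [div_mul_cancel₀ _ (hx j).ne']
    _ ≤ c * x j := by nlinarith [hx j]
  have hcpos : 0 < c := by
    have : ∃ j, v j ≠ 0 := by
      by_contra hcon; push_neg at hcon; exact hv0 (funext fun j => hcon j)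
    obtain ⟨j, hj⟩ := this
    have h1 : 0 < ‖v j‖ := norm_pos_iff.mpr hj
    have := hub j
    nlinarith [hx j, hx i0, norm_nonneg (v i0)]
  have key : ‖μ‖ * ‖v i0‖ ≤ M * ‖v i0‖ := by
    have h1 : ‖μ * v i0‖ = ‖(cx C).mulVec v i0‖ := by
      rw [hv]; simp
    calc ‖μ‖ * ‖v i0‖ = ‖μ * v i0‖ := (norm_mul _ _).symm
    _ = ‖(cx C).mulVec v i0‖ := h1
    _ = ‖∑ j, (C i0 j : ℂ) * v j‖ := by
        simp only [Matrix.mulVec, dotProduct, cx, Matrix.map_apply]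
    _ ≤ ∑ j, ‖(C i0 j : ℂ) * v j‖ := norm_sum_le _ _
    _ = ∑ j, C i0 j * ‖v j‖ := by
        refine Finset.sum_congr rfl fun j _ => ?_
        rw [norm_mul, Complex.norm_real, Real.norm_of_nonneg (hC i0 j)]
    _ ≤ ∑ j, C i0 j * (c * x j) :=
        Finset.sum_le_sum fun j _ => mul_le_mul_of_nonneg_left (hub j) (hC i0 j)
    _ = c * C.mulVec x i0 := by
        simp only [Matrix.mulVec, dotProduct, Finset.mul_sum]
        exact Finset.sum_congr rfl fun j _ => by ring
    _ ≤ c * (M * x i0) := mul_le_mul_of_nonneg_left (h i0) hcpos.le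
    _ = M * (c * x i0) := by ring
    _ = M * ‖v i0‖ := by
        rw [hc, div_mul_cancel₀ _ (hx i0).ne']
  have hvpos : 0 < ‖v i0‖ := by
    rw [hc] at hcpos
    rcases div_pos_iff.mp hcpos with h' | h'
    · exact h'.1
    · exact absurd h'.2 (not_lt.mpr (hx i0).le)
  exact le_of_mul_le_mul_right key hvpos

attribute [local instance] Matrix.linftyOpNormedRing Matrix.linftyOpNormedAlgebra
  Matrix.linftyOpNormedAddCommGroup

lemma lower [NeZero n] {C : Matrix (Fin n) (Fin n) ℝ} (hC : ∀ i j, 0 ≤ C i j) {x : Fin n → ℝ}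
    (hx : ∀ i, 0 < x i) {c : ℝ} (hc : 0 < c) (h : ∀ i, c * x i ≤ C.mulVec x i) :
    c ≤ specRad C := by
  have : CompleteSpace (Matrix (Fin n) (Fin n) ℂ) := FiniteDimensional.complete ℂ _
  have hpow : ∀ p i, c ^ p * x i ≤ (C ^ p).mulVec x i := by
    intro p
    induction p with
    | zero => intro i; simp [Matrix.one_mulVec]
    | succ p ih =>
      intro i
      have h1 : ∀ i, C.mulVec (fun j => c ^ p * x j) i ≤ C.mulVec ((C ^ p).mulVec x) i :=
        mulVec_mono hC ih
      have h2 : C.mulVec (fun j => c ^ p * x j) i = c ^ p * C.mulVec x i := by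
        simp only [Matrix.mulVec, dotProduct, Finset.mul_sum]
        exact Finset.sum_congr rfl fun j _ => by ring
      have h3 : c ^ (p + 1) * x i ≤ c ^ p * C.mulVec x i := by
        rw [pow_succ]
        calc c ^ p * c * x i = c ^ p * (c * x i) := by ring
        _ ≤ c ^ p * C.mulVec x i := mul_le_mul_of_nonneg_left (h i) (pow_nonneg hc.le p)
      calc c ^ (p + 1) * x i ≤ c ^ p * C.mulVec x i := h3
      _ = C.mulVec (fun j => c ^ p * x j) i := h2.symm
      _ ≤ C.mulVec ((C ^ p).mulVec x) i := h1 i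
      _ = (C ^ (p + 1)).mulVec x i := by rw [Matrix.mulVec_mulVec, ← pow_succ']
  obtain ⟨i0⟩ : Nonempty (Fin n) := ⟨⟨0, Nat.pos_of_ne_zero (NeZero.ne n)⟩⟩
  set xmax : ℝ := Finset.univ.sup' Finset.univ_nonempty x with hxmax
  have hxmax_pos : 0 < xmax := lt_of_lt_of_le (hx i0) (Finset.le_sup' x (Finset.mem_univ i0))
  set r : ℝ := x i0 / xmax with hr
  have hr_pos : 0 < r := div_pos (hx i0) hxmax_pos
  have hnorm : ∀ p : ℕ, c ^ p * r ≤ ‖(cx C) ^ p‖ := by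
    intro p
    have h1 : c ^ p * x i0 ≤ (∑ j, (C ^ p) i0 j) * xmax := by
      calc c ^ p * x i0 ≤ (C ^ p).mulVec x i0 := hpow p i0
      _ = ∑ j, (C ^ p) i0 j * x j := rfl
      _ ≤ ∑ j, (C ^ p) i0 j * xmax := Finset.sum_le_sum fun j _ =>
          mul_le_mul_of_nonneg_left (Finset.le_sup' x (Finset.mem_univ j)) (pow_nonneg' hC p i0 j)
      _ = (∑ j, (C ^ p) i0 j) * xmax := by rw [Finset.sum_mul]
    have h2 : (∑ j, (C ^ p) i0 j : ℝ) ≤ ‖(cx C) ^ p‖ := by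
      rw [← cx_pow, Matrix.linfty_opNorm_def]
      have : (∑ j, ‖(cx (C ^ p)) i0 j‖₊ : ℝ≥0) ≤
          (Finset.univ.sup fun i => ∑ j, ‖(cx (C ^ p)) i j‖₊) :=
        Finset.le_sup (f := fun i => ∑ j, ‖(cx (C ^ p)) i j‖₊) (Finset.mem_univ i0)
      calc (∑ j, (C ^ p) i0 j : ℝ) = (∑ j, ‖(cx (C ^ p)) i0 j‖₊ : ℝ≥0) := by
            push_cast
            refine Finset.sum_congr rfl fun j _ => ?_
            simp only [cx, Matrix.map_apply]
            rw [Complex.norm_real,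
              Real.norm_of_nonneg (pow_nonneg' hC p i0 j)]
      _ ≤ _ := by exact_mod_cast this
    calc c ^ p * r = (c ^ p * x i0) / xmax := by rw [hr]; ring
    _ ≤ ((∑ j, (C ^ p) i0 j) * xmax) / xmax := by gcongr
    _ = ∑ j, (C ^ p) i0 j := by field_simp
    _ ≤ ‖(cx C) ^ p‖ := h2
  have hG := spectrum.pow_norm_pow_one_div_tendsto_nhds_spectralRadius (cx C)
  have hcomp : ∀ᶠ p : ℕ in atTop, ENNReal.ofReal (c * r ^ (1 / p : ℝ)) ≤
      ENNReal.ofReal (‖(cx C) ^ p‖ ^ (1 / p : ℝ)) := by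
    filter_upwards [eventually_ge_atTop 1] with p hp
    apply ENNReal.ofReal_le_ofReal
    have hple : (0:ℝ) ≤ 1 / p := by positivity
    have : (c ^ p * r) ^ (1 / p : ℝ) ≤ ‖(cx C) ^ p‖ ^ (1 / p : ℝ) :=
      Real.rpow_le_rpow (by positivity) (hnorm p) hple
    calc c * r ^ (1 / p : ℝ) = (c ^ p) ^ (1 / p : ℝ) * r ^ (1 / p : ℝ) := by
          rw [← Real.rpow_natCast c p, ← Real.rpow_mul hc.le]
          rw [mul_one_div, div_self (by exact_mod_cast Nat.one_le_iff_ne_zero.mp hp : (p:ℝ) ≠ 0)]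
          rw [Real.rpow_one]
    _ = (c ^ p * r) ^ (1 / p : ℝ) := (Real.mul_rpow (by positivity) hr_pos.le).symm
    _ ≤ ‖(cx C) ^ p‖ ^ (1 / p : ℝ) := this
  have hlim : Tendsto (fun p : ℕ => ENNReal.ofReal (c * r ^ (1 / p : ℝ))) atTop
      (𝓝 (ENNReal.ofReal c)) := by
    have h0 : Tendsto (fun p : ℕ => (1 / p : ℝ)) atTop (𝓝 0) := tendsto_one_div_atTop_nhds_zero_nat
    have h1 : Tendsto (fun p : ℕ => r ^ (1 / p : ℝ)) atTop (𝓝 1) := by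
      have := (Real.continuousAt_const_rpow (a := r) hr_pos.ne').tendsto.comp h0
      simpa [Function.comp_def, Real.rpow_zero] using this
    have h2 : Tendsto (fun p : ℕ => c * r ^ (1 / p : ℝ)) atTop (𝓝 c) := by
      simpa using (tendsto_const_nhds (x := c)).mul h1
    exact (ENNReal.continuous_ofReal.tendsto c).comp h2
  have hle : ENNReal.ofReal c ≤ spectralRadius ℂ (cx C) :=
    le_of_tendsto_of_tendsto hlim hG hcomp
  have hle2 : spectralRadius ℂ (cx C) ≤ ENNReal.ofReal (specRad C) := by
    rw [spectralRadius]
    refine iSup₂_le fun μ hμ => ?_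
    rw [← ENNReal.ofReal_coe_nnreal, coe_nnnorm]
    exact ENNReal.ofReal_le_ofReal (abs_le_specRad hμ)
  exact (ENNReal.ofReal_le_ofReal_iff (specRad_nonneg C)).mp (hle.trans hle2)

noncomputable def supp (y : Fin n → ℝ) : Finset (Fin n) := by
  classical exact Finset.univ.filter (fun i => y i ≠ 0)

lemma mem_supp {y : Fin n → ℝ} {i : Fin n} : i ∈ supp y ↔ y i ≠ 0 := by
  simp [supp]

/-- one expansion step -/
lemma step {B : Matrix (Fin n) (Fin n) ℝ} (hB : ∀ i j, 0 ≤ B i j) (hirr : IsIrred B)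
    {y : Fin n → ℝ} (hy : ∀ i, 0 ≤ y i) (hy0 : y ≠ 0) :
    (∀ i, 0 ≤ (1 + B).mulVec y i) ∧ supp y ⊆ supp ((1 + B).mulVec y) ∧
      (supp y ≠ Finset.univ → supp y ⊂ supp ((1 + B).mulVec y)) := by
  have hz : ∀ i, (1 + B).mulVec y i = y i + B.mulVec y i := by
    intro i; rw [Matrix.add_mulVec, Matrix.one_mulVec]; rfl
  have hznn : ∀ i, 0 ≤ (1 + B).mulVec y i := fun i => by
    rw [hz]; exact add_nonneg (hy i) (mulVec_nonneg hB hy i)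
  have hsub : supp y ⊆ supp ((1 + B).mulVec y) := by
    intro i hi
    rw [mem_supp] at hi ⊢
    have hyi : 0 < y i := lt_of_le_of_ne (hy i) (Ne.symm hi)
    have := mulVec_nonneg hB hy i
    rw [hz]; positivity
  refine ⟨hznn, hsub, fun hne => ?_⟩
  rw [Finset.ssubset_iff_of_subset hsub]
  have hS : ∃ i, y i = 0 := by
    by_contra hcon
    push_neg at hcon
    exact hne (Finset.eq_univ_iff_forall.mpr fun i => mem_supp.mpr (hcon i))
  set S : Set (Fin n) := {i | y i = 0} with hSdef
  have hSne : S.Nonempty := hS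
  have hSneq : S ≠ Set.univ := by
    intro hcon
    apply hy0
    ext i
    have : i ∈ S := hcon ▸ Set.mem_univ i
    exact this
  obtain ⟨i, hiS, j, hjS, hBij⟩ := hirr S hSne hSneq
  have hyi : y i = 0 := hiS
  have hyj : 0 < y j := lt_of_le_of_ne (hy j) (Ne.symm hjS)
  refine ⟨i, ?_, ?_⟩
  · rw [mem_supp]
    have hBy : 0 < B.mulVec y i := by
      have hterm : 0 < B i j * y j := mul_pos (lt_of_le_of_ne (hB i j) (Ne.symm hBij)) hyj
      have hrw : B.mulVec y i = ∑ t, B i t * y t := rfl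
      rw [hrw]
      exact Finset.sum_pos' (fun t _ => mul_nonneg (hB i t) (hy t)) ⟨j, Finset.mem_univ j, hterm⟩
    rw [hz, hyi, zero_add]
    exact hBy.ne'
  · rw [mem_supp]; simpa using hyi

/-- iterate -/
lemma iterate_pos {B : Matrix (Fin n) (Fin n) ℝ} (hB : ∀ i j, 0 ≤ B i j) (hirr : IsIrred B) :
    ∀ m (y : Fin n → ℝ), (∀ i, 0 ≤ y i) → y ≠ 0 → n ≤ (supp y).card + m →
      ∀ i, 0 < ((1 + B) ^ m).mulVec y i := by
  intro m
  induction m with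
  | zero =>
    intro y hy hy0 hcard i
    have huniv : supp y = Finset.univ := Finset.eq_univ_of_card _ (le_antisymm
      (by simpa [Fintype.card_fin] using Finset.card_le_univ (supp y))
      (by simpa [Fintype.card_fin] using hcard))
    have h1 : y i ≠ 0 := mem_supp.mp (huniv ▸ Finset.mem_univ i)
    have h2 : 0 < y i := lt_of_le_of_ne (hy i) (Ne.symm h1)
    simpa [Matrix.one_mulVec] using h2
  | succ m ih =>
    intro y hy hy0 hcard i
    obtain ⟨hznn, hsub, hssub⟩ := step hB hirr hy hy0
    set z := (1 + B).mulVec y with hzdef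
    have hz0 : z ≠ 0 := by
      intro hcon
      obtain ⟨j, hj⟩ : ∃ j, y j ≠ 0 := by
        by_contra hc; push_neg at hc; exact hy0 (funext hc)
      have : j ∈ supp z := hsub (mem_supp.mpr hj)
      rw [mem_supp, hcon] at this
      exact this rfl
    have hcard' : n ≤ (supp z).card + m := by
      by_cases hu : supp y = Finset.univ
      · have h3 : (supp y).card ≤ (supp z).card := Finset.card_le_card hsub
        have h4 : (supp y).card = n := by rw [hu]; simp
        omega
      · have h3 : (supp y).card < (supp z).card := Finset.card_lt_card (hssub hu)
        omega
    have h4 := ih z hznn hz0 hcard' i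
    have heq : ((1 + B) ^ (m + 1)).mulVec y = ((1 + B) ^ m).mulVec z := by
      rw [hzdef, Matrix.mulVec_mulVec, ← pow_succ]
    rw [heq]
    exact h4

lemma irr_pos [NeZero n] {B : Matrix (Fin n) (Fin n) ℝ} (hB : ∀ i j, 0 ≤ B i j)
    (hirr : IsIrred B) {y : Fin n → ℝ} (hy : ∀ i, 0 ≤ y i) (hy0 : y ≠ 0) :
    ∀ i, 0 < ((1 + B) ^ (n - 1)).mulVec y i := by
  apply iterate_pos hB hirr
  · exact hy
  · exact hy0
  · have hn : 1 ≤ n := Nat.pos_of_ne_zero (NeZero.ne n)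
    have : 1 ≤ (supp y).card := by
      obtain ⟨j, hj⟩ : ∃ j, y j ≠ 0 := by
        by_contra hc; push_neg at hc; exact hy0 (funext hc)
      exact Finset.card_pos.mpr ⟨j, mem_supp.mpr hj⟩
    omega

lemma sup'_rpow [NeZero n] {f : Fin n → ℝ} (hf : ∀ i, 0 ≤ f i) {e : ℝ} (he : 0 ≤ e) :
    Finset.univ.sup' Finset.univ_nonempty (fun i => f i ^ e) =
      (Finset.univ.sup' Finset.univ_nonempty f) ^ e := by
  apply le_antisymm
  · exact Finset.sup'_le _ _ fun i _ =>
      Real.rpow_le_rpow (hf i) (Finset.le_sup' f (Finset.mem_univ i)) he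
  · obtain ⟨i, -, hi⟩ := Finset.exists_mem_eq_sup' Finset.univ_nonempty f
    rw [hi]
    exact Finset.le_sup' (fun i => f i ^ e) (Finset.mem_univ i)

lemma inf'_rpow [NeZero n] {f : Fin n → ℝ} (hf : ∀ i, 0 ≤ f i) {e : ℝ} (he : 0 ≤ e) :
    Finset.univ.inf' Finset.univ_nonempty (fun i => f i ^ e) =
      (Finset.univ.inf' Finset.univ_nonempty f) ^ e := by
  have hinf_nonneg : 0 ≤ Finset.univ.inf' Finset.univ_nonempty f := by
    obtain ⟨i, -, hi⟩ := Finset.exists_mem_eq_inf' Finset.univ_nonempty f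
    rw [hi]; exact hf i
  apply le_antisymm
  · obtain ⟨i, -, hi⟩ := Finset.exists_mem_eq_inf' Finset.univ_nonempty f
    rw [hi]
    exact Finset.inf'_le (fun i => f i ^ e) (Finset.mem_univ i)
  · exact Finset.le_inf' _ _ fun i _ =>
      Real.rpow_le_rpow hinf_nonneg (Finset.inf'_le f (Finset.mem_univ i)) he

lemma mulVec_pow_eig {A : Matrix (Fin n) (Fin n) ℝ} {x : Fin n → ℝ} {μ : ℝ}
    (h : A.mulVec x = μ • x) (p : ℕ) : (A ^ p).mulVec x = μ ^ p • x := by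
  induction p with
  | zero => simp [Matrix.one_mulVec]
  | succ p ih =>
    rw [pow_succ', ← Matrix.mulVec_mulVec, ih, Matrix.mulVec_smul, h, smul_smul, pow_succ,
      mul_comm]

lemma onePlus_pow_eig {B : Matrix (Fin n) (Fin n) ℝ} {z : Fin n → ℝ} {c : ℝ}
    (h : B.mulVec z = c • z) (m : ℕ) : ((1 + B) ^ m).mulVec z = (1 + c) ^ m • z := by
  have h1 : (1 + B).mulVec z = (1 + c) • z := by
    rw [Matrix.add_mulVec, Matrix.one_mulVec, h, add_smul, one_smul]
  induction m with
  | zero => simp [Matrix.one_mulVec]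
  | succ m ih =>
    rw [pow_succ', ← Matrix.mulVec_mulVec, ih, Matrix.mulVec_smul, h1, smul_smul, pow_succ,
      mul_comm]

end PFaux

/-- Theorem 4 of the paper, equality part.
For a nonnegative matrix `A` with nonzero row sums such that `A^L` is irreducible,
equality holds on either side (and hence both sides) of Liu's bound iff the vector
`x = (r_1(A^k),…,r_n(A^k))ᵀ` is an eigenvector of `A`. -/
theorem stmt4 {n : ℕ} [NeZero n] (A : Matrix (Fin n) (Fin n) ℝ)
    (hA : ∀ i j, 0 ≤ A i j) (hr : ∀ i, rowSum A i ≠ 0) (L k : ℕ) (hL : 0 < L)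
    (hirr : IsIrred (A ^ L)) :
    (specRad A = Finset.univ.sup' Finset.univ_nonempty
        (fun i => (rowSum (A ^ (k + L)) i / rowSum (A ^ k) i) ^ ((L : ℝ))⁻¹) ↔
      ∃ μ : ℝ, A.mulVec (fun i => rowSum (A ^ k) i) = μ • fun i => rowSum (A ^ k) i) ∧
    (specRad A = Finset.univ.inf' Finset.univ_nonempty
        (fun i => (rowSum (A ^ (k + L)) i / rowSum (A ^ k) i) ^ ((L : ℝ))⁻¹) ↔
      ∃ μ : ℝ, A.mulVec (fun i => rowSum (A ^ k) i) = μ • fun i => rowSum (A ^ k) i) := by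
  classical
  obtain ⟨idx⟩ : Nonempty (Fin n) := ⟨⟨0, Nat.pos_of_ne_zero (NeZero.ne n)⟩⟩
  set x : Fin n → ℝ := fun i => rowSum (A ^ k) i with hxdef
  have hxpos : ∀ i, 0 < x i := fun i => PFaux.rowSum_pow_pos hA hr k i
  have hxnn : ∀ i, 0 ≤ x i := fun i => (hxpos i).le
  have hxne : x ≠ 0 := fun hc => (hxpos idx).ne' (congrFun hc idx)
  set B : Matrix (Fin n) (Fin n) ℝ := A ^ L with hBdef
  have hB : ∀ i j, 0 ≤ B i j := PFaux.pow_nonneg' hA L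
  have hkey : ∀ i, rowSum (A ^ (k + L)) i = B.mulVec x i := by
    intro i
    rw [add_comm k L, pow_add, PFaux.rowSum_mul]
  have hBxpos : ∀ i, 0 < B.mulVec x i := fun i =>
    (hkey i) ▸ PFaux.rowSum_pow_pos hA hr (k + L) i
  set bfun : Fin n → ℝ := fun i => B.mulVec x i / x i with hbdef
  have hbpos : ∀ i, 0 < bfun i := fun i => div_pos (hBxpos i) (hxpos i)
  set M : ℝ := Finset.univ.sup' Finset.univ_nonempty bfun with hMdef
  set m : ℝ := Finset.univ.inf' Finset.univ_nonempty bfun with hmdef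
  have hbM : ∀ i, bfun i ≤ M := fun i => Finset.le_sup' bfun (Finset.mem_univ i)
  have hmb : ∀ i, m ≤ bfun i := fun i => Finset.inf'_le bfun (Finset.mem_univ i)
  have hMpos : 0 < M := lt_of_lt_of_le (hbpos idx) (hbM idx)
  have hmpos : 0 < m := by
    obtain ⟨i, -, hi⟩ := Finset.exists_mem_eq_inf' Finset.univ_nonempty bfun
    rw [hmdef, hi]; exact hbpos i
  have hBxM : ∀ i, B.mulVec x i ≤ M * x i := fun i =>
    (div_le_iff₀ (hxpos i)).mp (hbM i)
  have hBxm : ∀ i, m * x i ≤ B.mulVec x i := fun i => by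
    have := (le_div_iff₀ (hxpos i)).mp (hmb i)
    linarith [this]
  -- rewrite the goal sup'/inf' expressions
  have hfun : (fun i => (rowSum (A ^ (k + L)) i / rowSum (A ^ k) i) ^ ((L : ℝ))⁻¹) =
      fun i => bfun i ^ ((L : ℝ))⁻¹ := by
    funext i
    rw [hbdef]
    simp only []
    rw [hkey i]
  have hLinv : (0:ℝ) ≤ ((L : ℝ))⁻¹ := by positivity
  have hsup : Finset.univ.sup' Finset.univ_nonempty
      (fun i => (rowSum (A ^ (k + L)) i / rowSum (A ^ k) i) ^ ((L : ℝ))⁻¹) = M ^ ((L : ℝ))⁻¹ := by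
    rw [hfun, PFaux.sup'_rpow (fun i => (hbpos i).le) hLinv]
  have hinf : Finset.univ.inf' Finset.univ_nonempty
      (fun i => (rowSum (A ^ (k + L)) i / rowSum (A ^ k) i) ^ ((L : ℝ))⁻¹) = m ^ ((L : ℝ))⁻¹ := by
    rw [hfun, PFaux.inf'_rpow (fun i => (hbpos i).le) hLinv]
  rw [hsup, hinf]
  -- convert rpow equalities to pow equalities
  have hρnn : 0 ≤ specRad A := PFaux.specRad_nonneg A
  have hiffM : (specRad A = M ^ ((L : ℝ))⁻¹) ↔ specRad A ^ L = M := by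
    constructor
    · intro h
      rw [h, ← Real.rpow_natCast (M ^ ((L:ℝ))⁻¹) L, ← Real.rpow_mul hMpos.le,
        inv_mul_cancel₀ (by exact_mod_cast hL.ne' : (L:ℝ) ≠ 0), Real.rpow_one]
    · intro h
      rw [← h, ← Real.rpow_natCast (specRad A) L, ← Real.rpow_mul hρnn,
        mul_inv_cancel₀ (by exact_mod_cast hL.ne' : (L:ℝ) ≠ 0), Real.rpow_one]
  have hiffm : (specRad A = m ^ ((L : ℝ))⁻¹) ↔ specRad A ^ L = m := by
    constructor
    · intro h
      rw [h, ← Real.rpow_natCast (m ^ ((L:ℝ))⁻¹) L, ← Real.rpow_mul hmpos.le,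
        inv_mul_cancel₀ (by exact_mod_cast hL.ne' : (L:ℝ) ≠ 0), Real.rpow_one]
    · intro h
      rw [← h, ← Real.rpow_natCast (specRad A) L, ← Real.rpow_mul hρnn,
        mul_inv_cancel₀ (by exact_mod_cast hL.ne' : (L:ℝ) ≠ 0), Real.rpow_one]
  rw [hiffM, hiffm]
  -- spectral facts
  have hcxB : PFaux.cx B = (PFaux.cx A) ^ L := PFaux.cx_pow A L
  obtain ⟨μ0, hμ0mem, hμ0abs⟩ := PFaux.specRad_mem A
  have hμ0L : μ0 ^ L ∈ spectrum ℂ (PFaux.cx B) := by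
    rw [hcxB]
    exact spectrum.pow_image_subset (PFaux.cx A) L ⟨μ0, hμ0mem, rfl⟩
  have hμ0abs' : ‖μ0‖ = specRad A := hμ0abs
  have habsμ0L : ‖μ0 ^ L‖ = specRad A ^ L := by
    rw [norm_pow, hμ0abs']
  have hSRB : specRad B ≤ specRad A ^ L := by
    apply PFaux.specRad_le
    intro ν hν
    rw [hcxB, spectrum.map_pow_of_pos (PFaux.cx A) hL] at hν
    obtain ⟨μ, hμ, rfl⟩ := hν
    rw [norm_pow]
    exact pow_le_pow_left₀ (norm_nonneg μ) (PFaux.abs_le_specRad hμ) L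
  -- positivity machinery
  set P : Matrix (Fin n) (Fin n) ℝ := (1 + B) ^ (n - 1) with hPdef
  have hcommBP : B * P = P * B :=
    (((Commute.one_right B).add_right (Commute.refl B)).pow_right (n - 1)).eq
  have hcommAB : A * B = B * A := ((Commute.refl A).pow_right L).eq
  have hx' : ∀ i, 0 < P.mulVec x i := PFaux.irr_pos hB hirr hxnn hxne
  -- uniqueness of positive eigenvector: if B x = c x then x eigenvector of A
  have huniq : ∀ c : ℝ, 0 < c → B.mulVec x = c • x →
      ∃ μ : ℝ, A.mulVec x = μ • x := by
    intro c hc hBx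
    set y : Fin n → ℝ := A.mulVec x with hydef
    have hyeq : ∀ i, y i = rowSum (A ^ (k + 1)) i := by
      intro i
      rw [pow_succ', PFaux.rowSum_mul]
    have hypos : ∀ i, 0 < y i := fun i => (hyeq i) ▸ PFaux.rowSum_pow_pos hA hr (k + 1) i
    have hBy : B.mulVec y = c • y := by
      rw [hydef, Matrix.mulVec_mulVec, ← hcommAB, ← Matrix.mulVec_mulVec, hBx,
        Matrix.mulVec_smul]
    set t : ℝ := Finset.univ.inf' Finset.univ_nonempty (fun i => y i / x i) with htdef
    obtain ⟨i0, -, hi0⟩ := Finset.exists_mem_eq_inf' Finset.univ_nonempty (fun i => y i / x i)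
    have htpos : 0 < t := by
      rw [htdef, hi0]; exact div_pos (hypos i0) (hxpos i0)
    have hty : ∀ i, t * x i ≤ y i := fun i => by
      have h1 : t ≤ y i / x i := Finset.inf'_le (fun i => y i / x i) (Finset.mem_univ i)
      have := (le_div_iff₀ (hxpos i)).mp h1
      linarith
    set z2 : Fin n → ℝ := y - t • x with hz2def
    have hz2nn : ∀ i, 0 ≤ z2 i := fun i => by
      simp only [hz2def, Pi.sub_apply, Pi.smul_apply, smul_eq_mul, sub_nonneg]
      exact hty i
    have hz2i0 : z2 i0 = 0 := by
      simp only [hz2def, Pi.sub_apply, Pi.smul_apply, smul_eq_mul]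
      have : t = y i0 / x i0 := by rw [htdef, hi0]
      rw [this, div_mul_cancel₀ _ (hxpos i0).ne']
      ring
    have hBz2 : B.mulVec z2 = c • z2 := by
      rw [hz2def, Matrix.mulVec_sub, hBy, Matrix.mulVec_smul, hBx, smul_comm, ← smul_sub]
    by_cases hz20 : z2 = 0
    · refine ⟨t, ?_⟩
      have : y = t • x := by
        have := hz20
        rw [hz2def] at this
        linear_combination (norm := module) this
      exact this
    · exfalso
      have hPz2 : ∀ i, 0 < P.mulVec z2 i := PFaux.irr_pos hB hirr hz2nn hz20
      have := hPz2 i0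
      rw [hPdef, PFaux.onePlus_pow_eig hBz2 (n - 1)] at this
      simp only [Pi.smul_apply, smul_eq_mul, hz2i0, mul_zero] at this
      exact lt_irrefl 0 this
  -- converse direction: eigenvector implies both equalities
  have hconv : (∃ μ : ℝ, A.mulVec x = μ • x) →
      specRad A ^ L = M ∧ specRad A ^ L = m := by
    rintro ⟨μ, hμ⟩
    have hμpos : 0 < μ := by
      have h1 : μ * x idx = A.mulVec x idx := (congrFun hμ idx).symm
      have h2 : A.mulVec x idx = rowSum (A ^ (k + 1)) idx := by
        rw [pow_succ', PFaux.rowSum_mul]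
      have h3 : 0 < μ * x idx := by
        rw [h1, h2]; exact PFaux.rowSum_pow_pos hA hr (k + 1) idx
      nlinarith [hxpos idx]
    have hBx : B.mulVec x = μ ^ L • x := PFaux.mulVec_pow_eig hμ L
    have hbconst : ∀ i, bfun i = μ ^ L := by
      intro i
      rw [hbdef]
      simp only []
      rw [congrFun hBx i]
      simp only [Pi.smul_apply, smul_eq_mul]
      rw [mul_div_cancel_right₀ _ (hxpos i).ne']
    have hMeq : M = μ ^ L := by
      rw [hMdef]
      apply le_antisymm
      · exact Finset.sup'_le _ _ fun i _ => (hbconst i).le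
      · exact (hbconst idx) ▸ Finset.le_sup' bfun (Finset.mem_univ idx)
    have hmeq : m = μ ^ L := by
      rw [hmdef]
      apply le_antisymm
      · exact (hbconst idx) ▸ Finset.inf'_le bfun (Finset.mem_univ idx)
      · exact Finset.le_inf' _ _ fun i _ => (hbconst i).ge
    have hρμ : specRad A = μ := by
      apply le_antisymm
      · apply PFaux.specRad_le
        intro ν hν
        have hνL : ν ^ L ∈ spectrum ℂ (PFaux.cx B) := by
          rw [hcxB]
          exact spectrum.pow_image_subset (PFaux.cx A) L ⟨ν, hν, rfl⟩
        have hBxle : ∀ i, B.mulVec x i ≤ μ ^ L * x i := fun i => by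
          rw [congrFun hBx i]; simp
        have := PFaux.upper hB hxpos hBxle hνL
        rw [norm_pow] at this
        exact (pow_le_pow_iff_left₀ (norm_nonneg ν) hμpos.le hL.ne').mp
          (this.trans_eq (by ring))
      · have hmem := PFaux.mem_spectrum_of_real hxne hμ
        have := PFaux.abs_le_specRad hmem
        rwa [Complex.norm_real, Real.norm_of_nonneg hμpos.le] at this
    exact ⟨by rw [hρμ, hMeq], by rw [hρμ, hmeq]⟩
  -- forward direction, max side
  have hMfwd : specRad A ^ L = M → ∃ μ : ℝ, A.mulVec x = μ • x := by
    intro hEq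
    have hBxEq : B.mulVec x = M • x := by
      by_contra hne
      set z : Fin n → ℝ := M • x - B.mulVec x with hzdef
      have hznn : ∀ i, 0 ≤ z i := fun i => by
        simp only [hzdef, Pi.sub_apply, Pi.smul_apply, smul_eq_mul, sub_nonneg]
        exact hBxM i
      have hzne : z ≠ 0 := by
        intro hcon
        apply hne
        rw [hzdef] at hcon
        linear_combination (norm := module) -hcon
      have hPz : ∀ i, 0 < P.mulVec z i := PFaux.irr_pos hB hirr hznn hzne
      set x' : Fin n → ℝ := P.mulVec x with hx'def
      have hBx' : ∀ i, B.mulVec x' i = M * x' i - P.mulVec z i := by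
        intro i
        have h1 : B.mulVec x' = P.mulVec (B.mulVec x) := by
          rw [hx'def, Matrix.mulVec_mulVec, hcommBP, ← Matrix.mulVec_mulVec]
        have h2 : B.mulVec x = M • x - z := by
          rw [hzdef]; abel
        rw [h1, h2, Matrix.mulVec_sub, Matrix.mulVec_smul]
        simp [hx'def]
      set M' : ℝ := Finset.univ.sup' Finset.univ_nonempty (fun i => B.mulVec x' i / x' i)
        with hM'def
      have hM'lt : M' < M := by
        rw [hM'def]
        apply (Finset.sup'_lt_iff _).mpr
        intro i _
        rw [div_lt_iff₀ (hx' i), hBx' i]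
        have := hPz i
        linarith
      have hBx'le : ∀ i, B.mulVec x' i ≤ M' * x' i := fun i => by
        have h1 : B.mulVec x' i / x' i ≤ M' :=
          Finset.le_sup' (fun i => B.mulVec x' i / x' i) (Finset.mem_univ i)
        have := (div_le_iff₀ (hx' i)).mp h1
        linarith
      have := PFaux.upper hB hx' hBx'le hμ0L
      rw [habsμ0L, hEq] at this
      exact absurd this (not_le.mpr hM'lt)
    exact huniq M hMpos hBxEq
  -- forward direction, min side
  have hmfwd : specRad A ^ L = m → ∃ μ : ℝ, A.mulVec x = μ • x := by
    intro hEq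
    have hBxEq : B.mulVec x = m • x := by
      by_contra hne
      set z : Fin n → ℝ := B.mulVec x - m • x with hzdef
      have hznn : ∀ i, 0 ≤ z i := fun i => by
        simp only [hzdef, Pi.sub_apply, Pi.smul_apply, smul_eq_mul, sub_nonneg]
        exact hBxm i
      have hzne : z ≠ 0 := by
        intro hcon
        apply hne
        rw [hzdef] at hcon
        linear_combination (norm := module) hcon
      have hPz : ∀ i, 0 < P.mulVec z i := PFaux.irr_pos hB hirr hznn hzne
      set x' : Fin n → ℝ := P.mulVec x with hx'def
      have hBx' : ∀ i, B.mulVec x' i = m * x' i + P.mulVec z i := by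
        intro i
        have h1 : B.mulVec x' = P.mulVec (B.mulVec x) := by
          rw [hx'def, Matrix.mulVec_mulVec, hcommBP, ← Matrix.mulVec_mulVec]
        have h2 : B.mulVec x = m • x + z := by
          rw [hzdef]; abel
        rw [h1, h2, Matrix.mulVec_add, Matrix.mulVec_smul]
        simp [hx'def]
      set m' : ℝ := Finset.univ.inf' Finset.univ_nonempty (fun i => B.mulVec x' i / x' i)
        with hm'def
      have hm'gt : m < m' := by
        rw [hm'def]
        apply (Finset.lt_inf'_iff _).mpr
        intro i _
        rw [lt_div_iff₀ (hx' i), hBx' i]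
        have := hPz i
        linarith
      have hBx'ge : ∀ i, m' * x' i ≤ B.mulVec x' i := fun i => by
        have h1 : m' ≤ B.mulVec x' i / x' i :=
          Finset.inf'_le (fun i => B.mulVec x' i / x' i) (Finset.mem_univ i)
        have := (le_div_iff₀ (hx' i)).mp h1
        linarith
      have hlow : m' ≤ specRad B :=
        PFaux.lower hB hx' (hmpos.trans hm'gt) hBx'ge
      have : m' ≤ m := hlow.trans (hSRB.trans_eq hEq)
      exact absurd this (not_le.mpr hm'gt)
    exact huniq m hmpos hBxEq
  exact ⟨⟨hMfwd, fun hE => (hconv hE).1⟩, ⟨hmfwd, fun hE => (hconv hE).2⟩⟩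
end

section
/- Let A be an n×n nonnegative real matrix with all row sums nonzero. Then for any integer L > 0, every k ≥ 0, and every i ∈ {1,…,n}, min_{1≤j≤n} r_j(A^{k+L})/r_j(A^k) ≤ r_i(A^{k+1+L})/r_i(A^{k+1}) ≤ max_{1≤j≤n} r_j(A^{k+L})/r_j(A^k). In particular, as functions of k, the upper and lower bounds max_j r_j(A^{k+L})/r_j(A^k) and min_j r_j(A^{k+L})/r_j(A^k) are monotonically non-increasing and non-decreasing, respectively. -/
open Matrix

/-- Theorem 5 of the paper — monotonicity of Liu's bounds in `k`.
For a nonnegative matrix `A` with all row sums nonzero, any `L > 0`, `k ≥ 0` and any `i`,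
`min_j r_j(A^{k+L})/r_j(A^k) ≤ r_i(A^{k+1+L})/r_i(A^{k+1}) ≤ max_j r_j(A^{k+L})/r_j(A^k)`;
hence the upper and lower bounds are monotonically non-increasing resp. non-decreasing in `k`. -/
theorem stmt5 {n : ℕ} [NeZero n] (A : Matrix (Fin n) (Fin n) ℝ)
    (hA : ∀ i j, 0 ≤ A i j) (hr : ∀ i, rowSum A i ≠ 0) (L : ℕ) (hL : 0 < L) :
    (∀ k : ℕ, ∀ i : Fin n,
      Finset.univ.inf' Finset.univ_nonempty
          (fun j => rowSum (A ^ (k + L)) j / rowSum (A ^ k) j) ≤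
        rowSum (A ^ (k + 1 + L)) i / rowSum (A ^ (k + 1)) i ∧
      rowSum (A ^ (k + 1 + L)) i / rowSum (A ^ (k + 1)) i ≤
        Finset.univ.sup' Finset.univ_nonempty
          (fun j => rowSum (A ^ (k + L)) j / rowSum (A ^ k) j)) ∧
    (∀ k : ℕ,
      Finset.univ.sup' Finset.univ_nonempty
          (fun j => rowSum (A ^ (k + 1 + L)) j / rowSum (A ^ (k + 1)) j) ≤
        Finset.univ.sup' Finset.univ_nonempty
          (fun j => rowSum (A ^ (k + L)) j / rowSum (A ^ k) j) ∧
      Finset.univ.inf' Finset.univ_nonempty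
          (fun j => rowSum (A ^ (k + L)) j / rowSum (A ^ k) j) ≤
        Finset.univ.inf' Finset.univ_nonempty
          (fun j => rowSum (A ^ (k + 1 + L)) j / rowSum (A ^ (k + 1)) j)) := by
  have hmul : ∀ (B : Matrix (Fin n) (Fin n) ℝ) i,
      rowSum (A * B) i = ∑ j, A i j * rowSum B j := by
    intro B i
    simp only [rowSum, Matrix.mul_apply, Finset.mul_sum]
    exact Finset.sum_comm
  have hpos : ∀ (k : ℕ) (i : Fin n), 0 < rowSum (A ^ k) i := by
    intro k
    induction k with
    | zero => intro i; simp [rowSum, Matrix.one_apply]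
    | succ k ih =>
      intro i
      rw [pow_succ', hmul]
      have hA' : 0 < rowSum A i := lt_of_le_of_ne
        (Finset.sum_nonneg fun j _ => hA i j) (Ne.symm (hr i))
      obtain ⟨j, _, hj⟩ : ∃ j ∈ Finset.univ, 0 < A i j := by
        by_contra h
        push_neg at h
        have : rowSum A i ≤ 0 := Finset.sum_nonpos fun j hj => h j hj
        linarith
      exact Finset.sum_pos' (fun j _ => mul_nonneg (hA i j) (ih j).le)
        ⟨j, Finset.mem_univ j, mul_pos hj (ih j)⟩
  have main : ∀ k : ℕ, ∀ i : Fin n,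
      Finset.univ.inf' Finset.univ_nonempty
          (fun j => rowSum (A ^ (k + L)) j / rowSum (A ^ k) j) ≤
        rowSum (A ^ (k + 1 + L)) i / rowSum (A ^ (k + 1)) i ∧
      rowSum (A ^ (k + 1 + L)) i / rowSum (A ^ (k + 1)) i ≤
        Finset.univ.sup' Finset.univ_nonempty
          (fun j => rowSum (A ^ (k + L)) j / rowSum (A ^ k) j) := by
    intro k i
    set m := Finset.univ.inf' Finset.univ_nonempty
        (fun j => rowSum (A ^ (k + L)) j / rowSum (A ^ k) j) with hm
    set M := Finset.univ.sup' Finset.univ_nonempty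
        (fun j => rowSum (A ^ (k + L)) j / rowSum (A ^ k) j) with hM
    have hden : 0 < rowSum (A ^ (k + 1)) i := hpos _ i
    have e1 : rowSum (A ^ (k + 1 + L)) i = ∑ j, A i j * rowSum (A ^ (k + L)) j := by
      have : A ^ (k + 1 + L) = A * A ^ (k + L) := by
        rw [← pow_succ']; ring_nf
      rw [this, hmul]
    have e2 : rowSum (A ^ (k + 1)) i = ∑ j, A i j * rowSum (A ^ k) j := by
      rw [pow_succ', hmul]
    constructor
    · rw [le_div_iff₀ hden, e1, e2, Finset.mul_sum]
      apply Finset.sum_le_sum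
      intro j _
      have h1 : m ≤ rowSum (A ^ (k + L)) j / rowSum (A ^ k) j :=
        Finset.inf'_le (fun j => rowSum (A ^ (k + L)) j / rowSum (A ^ k) j) (Finset.mem_univ j)
      have h2 : m * rowSum (A ^ k) j ≤ rowSum (A ^ (k + L)) j :=
        (le_div_iff₀ (hpos k j)).mp h1
      calc m * (A i j * rowSum (A ^ k) j) = A i j * (m * rowSum (A ^ k) j) := by ring
        _ ≤ A i j * rowSum (A ^ (k + L)) j := mul_le_mul_of_nonneg_left h2 (hA i j)
    · rw [div_le_iff₀ hden, e1, e2, Finset.mul_sum]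
      apply Finset.sum_le_sum
      intro j _
      have h1 : rowSum (A ^ (k + L)) j / rowSum (A ^ k) j ≤ M :=
        Finset.le_sup' (fun j => rowSum (A ^ (k + L)) j / rowSum (A ^ k) j) (Finset.mem_univ j)
      have h2 : rowSum (A ^ (k + L)) j ≤ M * rowSum (A ^ k) j :=
        (div_le_iff₀ (hpos k j)).mp h1
      calc A i j * rowSum (A ^ (k + L)) j ≤ A i j * (M * rowSum (A ^ k) j) :=
            mul_le_mul_of_nonneg_left h2 (hA i j)
        _ = M * (A i j * rowSum (A ^ k) j) := by ring
  refine ⟨main, fun k => ⟨?_, ?_⟩⟩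
  · exact Finset.sup'_le _ _ fun i _ => (main k i).2
  · exact Finset.le_inf' _ _ fun i _ => (main k i).1
end

section
/- Let A be an n×n nonnegative real matrix with all row sums nonzero, and let M > 0, N ≥ 0, k ≥ 0 be integers. Write a_{ij}^{(M)} for the (i,j) entry of A^M. Then min over pairs (i,j) with a_{ij}^{(M)} > 0 of ( r_i(A^{k+M}) r_j(A^{k+N}) / ( r_i(A^k) r_j(A^k) ) )^{1/(M+N)} ≤ ρ(A) ≤ max over pairs (i,j) with a_{ij}^{(M)} > 0 of ( r_i(A^{k+M}) r_j(A^{k+N}) / ( r_i(A^k) r_j(A^k) ) )^{1/(M+N)}. -/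
open Matrix

attribute [local instance] Matrix.linftyOpNormedRing Matrix.linftyOpNormedAlgebra

namespace Stmt6Aux

open Filter

variable {n : ℕ}

lemma rowSum_mul (X Y : Matrix (Fin n) (Fin n) ℝ) (i : Fin n) :
    rowSum (X * Y) i = ∑ l, X i l * rowSum Y l := by
  simp only [rowSum, Matrix.mul_apply, Finset.mul_sum]
  exact Finset.sum_comm

lemma entry_pow_nonneg {A : Matrix (Fin n) (Fin n) ℝ} (hA : ∀ i j, 0 ≤ A i j) (m : ℕ)
    (i j : Fin n) : 0 ≤ (A ^ m) i j := by
  induction m generalizing i j with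
  | zero => by_cases h : i = j <;> simp [pow_zero, Matrix.one_apply, h]
  | succ m ih =>
    rw [pow_succ, Matrix.mul_apply]
    exact Finset.sum_nonneg fun l _ => mul_nonneg (ih i l) (hA l j)

lemma rowSum_pow_pos {A : Matrix (Fin n) (Fin n) ℝ} (hA : ∀ i j, 0 ≤ A i j)
    (hr : ∀ i, rowSum A i ≠ 0) (m : ℕ) (i : Fin n) : 0 < rowSum (A ^ m) i := by
  induction m generalizing i with
  | zero => simp [rowSum, pow_zero, Matrix.one_apply]
  | succ m ih =>
    have hApos : 0 < rowSum A i :=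
      lt_of_le_of_ne (Finset.sum_nonneg fun j _ => hA i j) (Ne.symm (hr i))
    obtain ⟨l₀, -, hl₀⟩ : ∃ l ∈ Finset.univ, 0 < A i l := by
      by_contra h
      push_neg at h
      have : rowSum A i = 0 := le_antisymm (Finset.sum_nonpos fun j hj => h j hj) hApos.le
      exact hr i this
    rw [pow_succ', rowSum_mul]
    calc (0:ℝ) < A i l₀ * rowSum (A ^ m) l₀ := mul_pos hl₀ (ih l₀)
      _ ≤ ∑ l, A i l * rowSum (A ^ m) l :=
        Finset.single_le_sum (fun l _ => mul_nonneg (hA i l) (ih l).le) (Finset.mem_univ l₀)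

lemma exists_entry_pos {A : Matrix (Fin n) (Fin n) ℝ} (hA : ∀ i j, 0 ≤ A i j)
    (hr : ∀ i, rowSum A i ≠ 0) (M : ℕ) (i : Fin n) : ∃ j, 0 < (A ^ M) i j := by
  by_contra h
  push_neg at h
  have : rowSum (A ^ M) i = 0 :=
    le_antisymm (Finset.sum_nonpos fun j _ => h j) (rowSum_pow_pos hA hr M i).le
  exact absurd this (rowSum_pow_pos hA hr M i).ne'

lemma rowSum_pow_add {A : Matrix (Fin n) (Fin n) ℝ} (k m : ℕ) (i : Fin n) :
    rowSum (A ^ (k + m)) i = ∑ j, (A ^ m) i j * rowSum (A ^ k) j := by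
  rw [add_comm, pow_add, rowSum_mul]

lemma map_pow_complex (A : Matrix (Fin n) (Fin n) ℝ) (m : ℕ) :
    (A ^ m).map (fun x : ℝ => (x : ℂ)) = (A.map (fun x : ℝ => (x : ℂ))) ^ m := by
  have := map_pow (Complex.ofRealHom.mapMatrix :
    Matrix (Fin n) (Fin n) ℝ →+* Matrix (Fin n) (Fin n) ℂ) A m
  simp only [RingHom.mapMatrix_apply] at this; exact this

lemma exists_eigenvector (B : Matrix (Fin n) (Fin n) ℂ) {μ : ℂ} (h : μ ∈ spectrum ℂ B) :
    ∃ v : Fin n → ℂ, v ≠ 0 ∧ B.mulVec v = μ • v := by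
  rw [spectrum.mem_iff] at h
  have hdet : (algebraMap ℂ (Matrix (Fin n) (Fin n) ℂ) μ - B).det = 0 := by
    by_contra hd
    exact h ((Matrix.isUnit_iff_isUnit_det _).mpr (Ne.isUnit hd))
  obtain ⟨v, hv0, hv⟩ := Matrix.exists_mulVec_eq_zero_iff.mpr hdet
  refine ⟨v, hv0, ?_⟩
  rw [Matrix.sub_mulVec, sub_eq_zero] at hv
  rw [← hv, Algebra.algebraMap_eq_smul_one, Matrix.smul_mulVec, Matrix.one_mulVec]

lemma pow_mulVec_eigen (B : Matrix (Fin n) (Fin n) ℂ) (v : Fin n → ℂ) (μ : ℂ)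
    (h : B.mulVec v = μ • v) (m : ℕ) : (B ^ m).mulVec v = μ ^ m • v := by
  induction m with
  | zero => simp [Matrix.one_mulVec]
  | succ m ih =>
    rw [pow_succ', ← Matrix.mulVec_mulVec, ih, Matrix.mulVec_smul, h, smul_smul, pow_succ',
      mul_comm]

lemma rowsum_le_norm (X : Matrix (Fin n) (Fin n) ℂ) (i : Fin n) :
    ∑ j, ‖X i j‖ ≤ ‖X‖ := by
  have h₁ : (∑ j, ‖X i j‖₊) ≤ ‖X‖₊ := by
    rw [Matrix.linfty_opNNNorm_def]
    exact Finset.le_sup (f := fun i => ∑ j, ‖X i j‖₊) (Finset.mem_univ i)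
  have := (NNReal.coe_le_coe).mpr h₁
  simpa [NNReal.coe_sum] using this

lemma collatz_lower (hn : 0 < n) (B : Matrix (Fin n) (Fin n) ℝ) (hB : ∀ i j, 0 ≤ B i j)
    (u : Fin n → ℝ) (hu : ∀ i, 0 < u i) (c : ℝ) (hc : 0 ≤ c)
    (h : ∀ i, c * u i ≤ ∑ j, B i j * u j) :
    ∃ μ ∈ spectrum ℂ (B.map (fun x : ℝ => (x : ℂ))), c ≤ ‖μ‖ := by
  haveI : Nonempty (Fin n) := ⟨⟨0, hn⟩⟩
  haveI : CompleteSpace (Matrix (Fin n) (Fin n) ℂ) := FiniteDimensional.complete ℂ _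
  set Bc := B.map (fun x : ℝ => (x : ℂ)) with hBc
  have hne : (spectrum ℂ Bc).Nonempty := spectrum.nonempty Bc
  rcases eq_or_lt_of_le hc with hc0 | hcpos
  · obtain ⟨μ, hμ⟩ := hne
    exact ⟨μ, hμ, by rw [← hc0]; exact norm_nonneg μ⟩
  have step : ∀ m : ℕ, ∀ i, c ^ m * u i ≤ ∑ j, (B ^ m) i j * u j := by
    intro m
    induction m with
    | zero => intro i; simp [Matrix.one_apply, Finset.sum_ite_eq, pow_zero]
    | succ m ih =>
      intro i
      have expand : ∑ j, (B ^ (m+1)) i j * u j = ∑ l, B i l * (∑ j, (B ^ m) l j * u j) := by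
        rw [pow_succ']
        simp only [Matrix.mul_apply, Finset.sum_mul, Finset.mul_sum]
        rw [Finset.sum_comm]
        apply Finset.sum_congr rfl; intro l _
        apply Finset.sum_congr rfl; intro j _
        ring
      rw [expand]
      calc c ^ (m+1) * u i = c ^ m * (c * u i) := by ring
        _ ≤ c ^ m * (∑ l, B i l * u l) :=
            mul_le_mul_of_nonneg_left (h i) (pow_nonneg hc m)
        _ = ∑ l, B i l * (c ^ m * u l) := by
            rw [Finset.mul_sum]; apply Finset.sum_congr rfl; intros; ring
        _ ≤ ∑ l, B i l * (∑ j, (B ^ m) l j * u j) :=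
            Finset.sum_le_sum fun l _ => mul_le_mul_of_nonneg_left (ih l) (hB i l)
  set i₀ : Fin n := ⟨0, hn⟩
  obtain ⟨iU, -, hiU⟩ := Finset.exists_max_image (Finset.univ : Finset (Fin n)) u
    ⟨i₀, Finset.mem_univ i₀⟩
  set U := u iU with hU
  have hUpos : 0 < U := hu iU
  set K := u i₀ / U with hK
  have hKpos : 0 < K := div_pos (hu i₀) hUpos
  have normbound : ∀ m : ℕ, c ^ m * K ≤ ‖Bc ^ m‖ := by
    intro m
    have h1 : c ^ m * u i₀ ≤ ∑ j, (B ^ m) i₀ j * u j := step m i₀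
    have h2 : ∑ j, (B ^ m) i₀ j * u j ≤ U * ∑ j, (B ^ m) i₀ j := by
      rw [Finset.mul_sum]
      refine Finset.sum_le_sum fun j _ => ?_
      have := entry_pow_nonneg hB m i₀ j
      calc (B ^ m) i₀ j * u j ≤ (B ^ m) i₀ j * U :=
            mul_le_mul_of_nonneg_left (hiU j (Finset.mem_univ j)) this
        _ = U * (B ^ m) i₀ j := mul_comm _ _
    have h3 : ∑ j, (B ^ m) i₀ j ≤ ‖Bc ^ m‖ := by
      have hj : ∀ j, (B ^ m) i₀ j ≤ ‖(Bc ^ m) i₀ j‖ := by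
        intro j
        rw [← map_pow_complex]
        simp only [Matrix.map_apply, Complex.norm_real]
        exact le_abs_self _
      calc ∑ j, (B ^ m) i₀ j ≤ ∑ j, ‖(Bc ^ m) i₀ j‖ := Finset.sum_le_sum fun j _ => hj j
        _ ≤ ‖Bc ^ m‖ := rowsum_le_norm _ i₀
    have hfin : c ^ m * u i₀ ≤ U * ‖Bc ^ m‖ :=
      h1.trans (h2.trans (mul_le_mul_of_nonneg_left h3 hUpos.le))
    rw [hK, ← mul_div_assoc, div_le_iff₀ hUpos]
    calc c ^ m * u i₀ ≤ U * ‖Bc ^ m‖ := hfin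
      _ = ‖Bc ^ m‖ * U := mul_comm _ _
  have gelfand := spectrum.pow_norm_pow_one_div_tendsto_nhds_spectralRadius Bc
  have glim : Tendsto (fun m : ℕ => ENNReal.ofReal (c * K ^ (1 / (m:ℝ)))) atTop
      (nhds (ENNReal.ofReal c)) := by
    have hexp : Tendsto (fun m : ℕ => (1 / (m:ℝ))) atTop (nhds 0) :=
      tendsto_one_div_atTop_nhds_zero_nat
    have hKlim : Tendsto (fun m : ℕ => K ^ (1 / (m:ℝ))) atTop (nhds 1) := by
      have h0 : Tendsto (fun m : ℕ => Real.log K * (1 / (m:ℝ))) atTop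
          (nhds (Real.log K * 0)) := hexp.const_mul (Real.log K)
      rw [mul_zero] at h0
      have h1 := (Real.continuous_exp.tendsto 0).comp h0
      rw [Real.exp_zero] at h1
      exact h1.congr fun m => (Real.rpow_def_of_pos hKpos _).symm
    have hmul : Tendsto (fun m : ℕ => c * K ^ (1 / (m:ℝ))) atTop (nhds (c * 1)) :=
      hKlim.const_mul c
    rw [mul_one] at hmul
    exact (ENNReal.continuous_ofReal.continuousAt.tendsto).comp hmul
  have hle : ENNReal.ofReal c ≤ spectralRadius ℂ Bc := by
    refine le_of_tendsto_of_tendsto glim gelfand ?_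
    filter_upwards [eventually_ge_atTop 1] with m hm
    apply ENNReal.ofReal_le_ofReal
    have hm0 : (m:ℝ) ≠ 0 := by positivity
    have key : c * K ^ (1 / (m:ℝ)) = (c ^ m * K) ^ (1 / (m:ℝ)) := by
      rw [Real.mul_rpow (by positivity) hKpos.le, ← Real.rpow_natCast c m,
        ← Real.rpow_mul hcpos.le]
      rw [mul_one_div, div_self hm0, Real.rpow_one]
    rw [key]
    exact Real.rpow_le_rpow (by positivity) (normbound m) (by positivity)
  obtain ⟨μ, hμmem, hμ⟩ := spectrum.exists_nnnorm_eq_spectralRadius_of_nonempty hne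
  refine ⟨μ, hμmem, ?_⟩
  rw [← hμ] at hle
  have h2 : ENNReal.ofReal c ≤ ENNReal.ofReal ‖μ‖ := by
    rw [← ENNReal.ofReal_coe_nnreal] at hle; exact hle
  have hcle : c ≤ ‖μ‖ := (ENNReal.ofReal_le_ofReal_iff (norm_nonneg μ)).mp h2
  exact hcle

lemma key_upper {A : Matrix (Fin n) (Fin n) ℝ} (hA : ∀ i j, 0 ≤ A i j)
    (hr : ∀ i, rowSum A i ≠ 0) (M N k : ℕ) {μ : ℂ}
    (hμ : μ ∈ spectrum ℂ (A.map (fun x : ℝ => (x : ℂ)))) :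
    ∃ i j, 0 < (A ^ M) i j ∧ ‖μ‖ ^ (M + N) ≤
      rowSum (A ^ (k + M)) i * rowSum (A ^ (k + N)) j /
        (rowSum (A ^ k) i * rowSum (A ^ k) j) := by
  obtain ⟨v, hv0, hv⟩ := exists_eigenvector _ hμ
  have hvpow := pow_mulVec_eigen _ v μ hv (M + N)
  set u : Fin n → ℝ := fun l => rowSum (A ^ k) l with hu_def
  have hu : ∀ l, 0 < u l := rowSum_pow_pos hA hr k
  haveI : Nonempty (Fin n) := by
    obtain ⟨l, hl⟩ := Function.ne_iff.mp hv0
    exact ⟨l⟩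
  obtain ⟨i, -, hi⟩ := Finset.exists_max_image (Finset.univ : Finset (Fin n))
    (fun l => ‖v l‖ / u l) Finset.univ_nonempty
  set m := ‖v i‖ / u i with hm_def
  have hmpos : 0 < m := by
    obtain ⟨l, hl⟩ := Function.ne_iff.mp hv0
    have : 0 < ‖v l‖ / u l :=
      div_pos (by simpa using (norm_pos_iff.mpr hl)) (hu l)
    exact lt_of_lt_of_le this (hi l (Finset.mem_univ l))
  have habs : ∀ l, ‖v l‖ ≤ m * u l := fun l =>
    (div_le_iff₀ (hu l)).mp (hi l (Finset.mem_univ l))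
  have hvi : ‖v i‖ = m * u i := (div_mul_cancel₀ _ (hu i).ne').symm
  have heig : ‖μ‖ ^ (M + N) * (m * u i) =
      ‖∑ l, ((A ^ (M + N)) i l : ℂ) * v l‖ := by
    have h1 : (∑ l, ((A ^ (M + N)) i l : ℂ) * v l) = μ ^ (M + N) * v i := by
      have := congrFun hvpow i
      rw [← map_pow_complex] at this
      simpa [Matrix.mulVec, dotProduct, Matrix.map_apply, Pi.smul_apply,
        smul_eq_mul] using this
    rw [h1, norm_mul, norm_pow, hvi]
  have htri : ‖∑ l, ((A ^ (M + N)) i l : ℂ) * v l‖ ≤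
      m * rowSum (A ^ (k + (M + N))) i := by
    calc ‖∑ l, ((A ^ (M + N)) i l : ℂ) * v l‖
        ≤ ∑ l, ‖((A ^ (M + N)) i l : ℂ) * v l‖ := norm_sum_le _ _
      _ = ∑ l, (A ^ (M + N)) i l * ‖v l‖ := by
          refine Finset.sum_congr rfl fun l _ => ?_
          rw [norm_mul, Complex.norm_real, Real.norm_eq_abs,
            abs_of_nonneg (entry_pow_nonneg hA _ i l)]
      _ ≤ ∑ l, (A ^ (M + N)) i l * (m * u l) :=
          Finset.sum_le_sum fun l _ =>
            mul_le_mul_of_nonneg_left (habs l) (entry_pow_nonneg hA _ i l)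
      _ = m * ∑ l, (A ^ (M + N)) i l * u l := by
          rw [Finset.mul_sum]; exact Finset.sum_congr rfl fun l _ => by ring
      _ = m * rowSum (A ^ (k + (M + N))) i := by rw [rowSum_pow_add]
  set T := Finset.univ.filter (fun j => 0 < (A ^ M) i j) with hT
  have hTne : T.Nonempty := by
    obtain ⟨j, hj⟩ := exists_entry_pos hA hr M i
    exact ⟨j, by simp [hT, hj]⟩
  obtain ⟨j₀, hj₀T, hj₀⟩ := Finset.exists_max_image T
    (fun j => rowSum (A ^ (k + N)) j / u j) hTne
  have hj₀pos : 0 < (A ^ M) i j₀ := by simpa [hT] using hj₀T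
  set ψ := rowSum (A ^ (k + N)) j₀ / u j₀ with hψ
  have hψpos : 0 < ψ := div_pos (rowSum_pow_pos hA hr _ _) (hu j₀)
  have hsplit : rowSum (A ^ (k + (M + N))) i ≤ ψ * rowSum (A ^ (k + M)) i := by
    have h1 : rowSum (A ^ (k + (M + N))) i = ∑ j, (A ^ M) i j * rowSum (A ^ (k + N)) j := by
      have hadd : k + (M + N) = (k + N) + M := by ring
      rw [hadd, rowSum_pow_add]
    rw [h1]
    have h2 : ∀ j, (A ^ M) i j * rowSum (A ^ (k + N)) j ≤ (A ^ M) i j * (ψ * u j) := by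
      intro j
      rcases lt_or_eq_of_le (entry_pow_nonneg hA M i j) with hpos | hzero
      · refine mul_le_mul_of_nonneg_left ?_ (entry_pow_nonneg hA M i j)
        have hjT : j ∈ T := by simp [hT, hpos]
        have hle := hj₀ j hjT
        calc rowSum (A ^ (k + N)) j = (rowSum (A ^ (k + N)) j / u j) * u j :=
              (div_mul_cancel₀ _ (hu j).ne').symm
          _ ≤ ψ * u j := mul_le_mul_of_nonneg_right hle (hu j).le
      · rw [← hzero]; simp
    calc ∑ j, (A ^ M) i j * rowSum (A ^ (k + N)) j ≤ ∑ j, (A ^ M) i j * (ψ * u j) :=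
          Finset.sum_le_sum fun j _ => h2 j
      _ = ψ * ∑ j, (A ^ M) i j * u j := by
          rw [Finset.mul_sum]; exact Finset.sum_congr rfl fun j _ => by ring
      _ = ψ * rowSum (A ^ (k + M)) i := by rw [rowSum_pow_add]
  refine ⟨i, j₀, hj₀pos, ?_⟩
  have hmain : ‖μ‖ ^ (M + N) * (m * u i) ≤ m * (ψ * rowSum (A ^ (k + M)) i) := by
    rw [heig]
    exact htri.trans (mul_le_mul_of_nonneg_left hsplit hmpos.le)
  have hmain2 : ‖μ‖ ^ (M + N) * u i ≤ ψ * rowSum (A ^ (k + M)) i := by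
    rw [show ‖μ‖ ^ (M + N) * (m * u i) = m * (‖μ‖ ^ (M + N) * u i) by ring]
      at hmain
    exact le_of_mul_le_mul_left hmain hmpos
  rw [le_div_iff₀ (mul_pos (hu i) (hu j₀))]
  calc ‖μ‖ ^ (M + N) * (u i * u j₀)
      = (‖μ‖ ^ (M + N) * u i) * u j₀ := by ring
    _ ≤ (ψ * rowSum (A ^ (k + M)) i) * u j₀ :=
        mul_le_mul_of_nonneg_right hmain2 (hu j₀).le
    _ = rowSum (A ^ (k + M)) i * rowSum (A ^ (k + N)) j₀ := by
        rw [hψ]; field_simp [(hu j₀).ne']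

lemma rpow_bound_upper {P : ℕ} (hP : 0 < P) {x t : ℝ} (hx : 0 ≤ x) (h : x ^ P ≤ t) :
    x ≤ t ^ ((P:ℝ))⁻¹ := by
  have hP0 : ((P:ℝ)) ≠ 0 := Nat.cast_ne_zero.mpr hP.ne'
  have h0 : (0:ℝ) ≤ x ^ P := pow_nonneg hx P
  have hle := Real.rpow_le_rpow h0 h (by positivity : (0:ℝ) ≤ ((P:ℝ))⁻¹)
  calc x = (x ^ P) ^ ((P:ℝ))⁻¹ := by
        rw [← Real.rpow_natCast x P, ← Real.rpow_mul hx, mul_inv_cancel₀ hP0, Real.rpow_one]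
    _ ≤ t ^ ((P:ℝ))⁻¹ := hle

lemma rpow_bound_lower {P : ℕ} (hP : 0 < P) {x t : ℝ} (hx : 0 ≤ x) (ht : 0 ≤ t)
    (h : t ≤ x ^ P) : t ^ ((P:ℝ))⁻¹ ≤ x := by
  have hP0 : ((P:ℝ)) ≠ 0 := Nat.cast_ne_zero.mpr hP.ne'
  have hle := Real.rpow_le_rpow ht h (by positivity : (0:ℝ) ≤ ((P:ℝ))⁻¹)
  calc t ^ ((P:ℝ))⁻¹ ≤ (x ^ P) ^ ((P:ℝ))⁻¹ := hle
    _ = x := by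
        rw [← Real.rpow_natCast x P, ← Real.rpow_mul hx, mul_inv_cancel₀ hP0, Real.rpow_one]

end Stmt6Aux

open Stmt6Aux in
/-- Theorem 7 of the paper, inequality part — generalized Xu–Xu bound.
For a nonnegative matrix `A` with all row sums nonzero and integers `M > 0`, `N ≥ 0`, `k ≥ 0`,
the spectral radius is bounded below and above by the min resp. max over pairs `(i,j)` with
`(A^M)_{ij} > 0` of `(r_i(A^{k+M}) r_j(A^{k+N}) / (r_i(A^k) r_j(A^k)))^{1/(M+N)}`. -/
theorem stmt6 {n : ℕ} (A : Matrix (Fin n) (Fin n) ℝ)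
    (hA : ∀ i j, 0 ≤ A i j) (hr : ∀ i, rowSum A i ≠ 0) (M N k : ℕ) (hM : 0 < M) :
    sInf {x : ℝ | ∃ i j : Fin n, 0 < (A ^ M) i j ∧
        x = (rowSum (A ^ (k + M)) i * rowSum (A ^ (k + N)) j /
              (rowSum (A ^ k) i * rowSum (A ^ k) j)) ^ (((M : ℝ) + N))⁻¹} ≤ specRad A ∧
    specRad A ≤ sSup {x : ℝ | ∃ i j : Fin n, 0 < (A ^ M) i j ∧
        x = (rowSum (A ^ (k + M)) i * rowSum (A ^ (k + N)) j /
              (rowSum (A ^ k) i * rowSum (A ^ k) j)) ^ (((M : ℝ) + N))⁻¹} := by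
  classical
  set f : Fin n → Fin n → ℝ := fun i j =>
    (rowSum (A ^ (k + M)) i * rowSum (A ^ (k + N)) j /
      (rowSum (A ^ k) i * rowSum (A ^ k) j)) ^ (((M : ℝ) + N))⁻¹ with hf
  set S : Set ℝ := {x : ℝ | ∃ i j : Fin n, 0 < (A ^ M) i j ∧ x = f i j} with hS
  rcases Nat.eq_zero_or_pos n with hn | hn
  · subst hn
    have hSempty : S = ∅ := Set.eq_empty_iff_forall_notMem.mpr (by
      rintro x ⟨i, -⟩; exact i.elim0)
    haveI : Subsingleton (Matrix (Fin 0) (Fin 0) ℂ) :=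
      ⟨fun a b => by ext i; exact i.elim0⟩
    have hσ : spectrum ℂ (A.map (fun x : ℝ => (x : ℂ))) = ∅ :=
      Set.eq_empty_iff_forall_notMem.mpr fun μ hμ =>
        (spectrum.mem_iff.mp hμ) (isUnit_of_subsingleton _)
    have hrad : specRad A = 0 := by
      rw [specRad, hσ, Set.image_empty, Real.sSup_empty]
    rw [hSempty, hrad]
    simp [Real.sInf_empty, Real.sSup_empty]
  -- main case
  haveI : Nonempty (Fin n) := ⟨⟨0, hn⟩⟩
  haveI : CompleteSpace (Matrix (Fin n) (Fin n) ℂ) := FiniteDimensional.complete ℂ _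
  set Ac := A.map (fun x : ℝ => (x : ℂ)) with hAc
  have hexpcast : ((M + N : ℕ) : ℝ) = (M : ℝ) + N := by push_cast; ring
  have hMN : 0 < M + N := Nat.lt_of_lt_of_le hM (Nat.le_add_right M N)
  have hu : ∀ l, 0 < rowSum (A ^ k) l := rowSum_pow_pos hA hr k
  -- S is finite, hence bounded
  have hSsub : S ⊆ Set.range (fun p : Fin n × Fin n => f p.1 p.2) := by
    rintro x ⟨i, j, -, rfl⟩; exact ⟨(i, j), rfl⟩
  have hSfin : S.Finite := (Set.finite_range _).subset hSsub
  -- spectrum of Ac: nonempty, compact, max modulus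
  have hne : (spectrum ℂ Ac).Nonempty := spectrum.nonempty Ac
  obtain ⟨μs, hμsmem, hμsmax⟩ := (spectrum.isCompact Ac).exists_isMaxOn hne
    continuous_norm.continuousOn
  have hgreat : IsGreatest ((fun μ : ℂ => ‖μ‖) '' spectrum ℂ Ac)
      (‖μs‖) := by
    constructor
    · exact ⟨μs, hμsmem, rfl⟩
    · rintro x ⟨μ, hμ, rfl⟩; exact hμsmax hμ
  have hrad : specRad A = ‖μs‖ := hgreat.csSup_eq
  have hradnn : 0 ≤ specRad A := by rw [hrad]; exact norm_nonneg μs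
  constructor
  · -- lower bound
    -- build the Collatz–Wielandt vector inequality with c = min over admissible pairs
    set T : Finset (Fin n × Fin n) :=
      Finset.univ.filter (fun p : Fin n × Fin n => 0 < (A ^ M) p.1 p.2) with hT
    have hTne : T.Nonempty := by
      obtain ⟨j, hj⟩ := exists_entry_pos hA hr M ⟨0, hn⟩
      exact ⟨(⟨0, hn⟩, j), by simp [hT, hj]⟩
    set g : Fin n × Fin n → ℝ := fun p =>
      rowSum (A ^ (k + M)) p.1 * rowSum (A ^ (k + N)) p.2 /
        (rowSum (A ^ k) p.1 * rowSum (A ^ k) p.2) with hg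
    obtain ⟨p₀, hp₀T, hp₀⟩ := Finset.exists_min_image T g hTne
    set c := g p₀ with hc
    have hcpos : 0 < c := by
      apply div_pos (mul_pos (rowSum_pow_pos hA hr _ _) (rowSum_pow_pos hA hr _ _))
        (mul_pos (hu _) (hu _))
    have hclaim : ∀ i, c * rowSum (A ^ k) i ≤ ∑ j, (A ^ (M + N)) i j * rowSum (A ^ k) j := by
      intro i
      have hsum : ∑ j, (A ^ (M + N)) i j * rowSum (A ^ k) j
          = ∑ j, (A ^ M) i j * rowSum (A ^ (k + N)) j := by
        rw [← rowSum_pow_add]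
        have hadd : k + (M + N) = (k + N) + M := by ring
        rw [hadd, rowSum_pow_add]
      rw [hsum]
      -- pick the minimizing admissible j for this i
      set Ti := Finset.univ.filter (fun j => 0 < (A ^ M) i j) with hTi
      have hTine : Ti.Nonempty := by
        obtain ⟨j, hj⟩ := exists_entry_pos hA hr M i
        exact ⟨j, by simp [hTi, hj]⟩
      obtain ⟨j₁, hj₁T, hj₁⟩ := Finset.exists_min_image Ti
        (fun j => rowSum (A ^ (k + N)) j / rowSum (A ^ k) j) hTine
      have hj₁pos : 0 < (A ^ M) i j₁ := by simpa [hTi] using hj₁T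
      set ψ := rowSum (A ^ (k + N)) j₁ / rowSum (A ^ k) j₁ with hψ
      have hψpos : 0 < ψ := div_pos (rowSum_pow_pos hA hr _ _) (hu j₁)
      have h2 : ∀ j, (A ^ M) i j * (ψ * rowSum (A ^ k) j) ≤
          (A ^ M) i j * rowSum (A ^ (k + N)) j := by
        intro j
        rcases lt_or_eq_of_le (entry_pow_nonneg hA M i j) with hpos | hzero
        · refine mul_le_mul_of_nonneg_left ?_ (entry_pow_nonneg hA M i j)
          have hjT : j ∈ Ti := by simp [hTi, hpos]
          have hle := hj₁ j hjT
          calc ψ * rowSum (A ^ k) j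
              ≤ (rowSum (A ^ (k + N)) j / rowSum (A ^ k) j) * rowSum (A ^ k) j :=
                mul_le_mul_of_nonneg_right hle (hu j).le
            _ = rowSum (A ^ (k + N)) j := div_mul_cancel₀ _ (hu j).ne'
        · rw [← hzero]; simp
      have h3 : ψ * rowSum (A ^ (k + M)) i ≤ ∑ j, (A ^ M) i j * rowSum (A ^ (k + N)) j := by
        calc ψ * rowSum (A ^ (k + M)) i = ∑ j, (A ^ M) i j * (ψ * rowSum (A ^ k) j) := by
              rw [rowSum_pow_add, Finset.mul_sum]
              exact Finset.sum_congr rfl fun j _ => by ring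
          _ ≤ ∑ j, (A ^ M) i j * rowSum (A ^ (k + N)) j :=
              Finset.sum_le_sum fun j _ => h2 j
      refine le_trans ?_ h3
      -- c * u i ≤ ψ * rowSum (A^{k+M}) i since c ≤ g (i, j₁)
      have hcle : c ≤ g (i, j₁) := hp₀ (i, j₁) (by simp [hT, hj₁pos])
      have hgeq : g (i, j₁) * rowSum (A ^ k) i = ψ * rowSum (A ^ (k + M)) i := by
        rw [hg, hψ]
        field_simp [(hu i).ne', (hu j₁).ne']
      calc c * rowSum (A ^ k) i ≤ g (i, j₁) * rowSum (A ^ k) i :=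
            mul_le_mul_of_nonneg_right hcle (hu i).le
        _ = ψ * rowSum (A ^ (k + M)) i := hgeq
    -- apply the Collatz–Wielandt lower bound to B = A^(M+N)
    obtain ⟨μ, hμmem, hμge⟩ := collatz_lower hn (A ^ (M + N))
      (entry_pow_nonneg hA (M + N)) (fun l => rowSum (A ^ k) l) hu c hcpos.le hclaim
    -- μ = λ^(M+N) for some λ in the spectrum of Ac
    rw [map_pow_complex, ← hAc, spectrum.map_pow_of_pos Ac hMN] at hμmem
    obtain ⟨lam, hlammem, hlameq⟩ := hμmem
    have hlamle : ‖lam‖ ≤ specRad A := by rw [hrad]; exact hμsmax hlammem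
    have hcle2 : c ≤ specRad A ^ (M + N) := by
      calc c ≤ ‖μ‖ := hμge
        _ = ‖lam‖ ^ (M + N) := by rw [← hlameq, norm_pow]
        _ ≤ specRad A ^ (M + N) :=
            pow_le_pow_left₀ (norm_nonneg lam) hlamle (M + N)
    have helem : f p₀.1 p₀.2 ∈ S := ⟨p₀.1, p₀.2, by simpa [hT] using hp₀T, rfl⟩
    have hfc : f p₀.1 p₀.2 = c ^ (((M:ℝ) + N))⁻¹ := by rw [hf, hc, hg]
    have : f p₀.1 p₀.2 ≤ specRad A := by
      rw [hfc, ← hexpcast]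
      exact rpow_bound_lower hMN hradnn hcpos.le hcle2
    exact le_trans (csInf_le hSfin.bddBelow helem) this
  · -- upper bound
    obtain ⟨i, j, hpos, hle⟩ := key_upper hA hr M N k hμsmem
    have helem : f i j ∈ S := ⟨i, j, hpos, rfl⟩
    have : specRad A ≤ f i j := by
      rw [hf, ← hexpcast]
      exact rpow_bound_upper hMN hradnn (by rw [hrad]; exact hle)
    exact le_trans this (le_csSup hSfin.bddAbove helem)
end

section
/- Let A be an n×n nonnegative real matrix with all row sums nonzero, and let M > 0, N ≥ 0, k ≥ 0 be integers such that A^{M+N} is irreducible. Then equality holds on either side (and hence both sides) of the bound min_{(i,j): a_{ij}^{(M)}>0} ( r_i(A^{k+M}) r_j(A^{k+N}) / (r_i(A^k) r_j(A^k)) )^{1/(M+N)} ≤ ρ(A) ≤ max_{(i,j): a_{ij}^{(M)}>0} ( r_i(A^{k+M}) r_j(A^{k+N}) / (r_i(A^k) r_j(A^k)) )^{1/(M+N)} if and only if x = (r_1(A^k),…,r_n(A^k))ᵀ is an eigenvector of A. -/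
open Matrix Filter Topology

namespace Stmt7

variable {n : ℕ}


lemma pow_entry_nonneg {A : Matrix (Fin n) (Fin n) ℝ} (hA : ∀ i j, 0 ≤ A i j) (m : ℕ) :
    ∀ i j, 0 ≤ (A ^ m) i j := by
  induction m with
  | zero => intro i j; simp [Matrix.one_apply]; positivity
  | succ m ih =>
      intro i j
      rw [pow_succ, Matrix.mul_apply]
      exact Finset.sum_nonneg fun l _ => mul_nonneg (ih i l) (hA l j)

lemma mulVec_nonneg {A : Matrix (Fin n) (Fin n) ℝ} (hA : ∀ i j, 0 ≤ A i j)
    {v : Fin n → ℝ} (hv : ∀ i, 0 ≤ v i) : ∀ i, 0 ≤ (A *ᵥ v) i := by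
  intro i
  simp only [Matrix.mulVec, dotProduct]
  exact Finset.sum_nonneg fun j _ => mul_nonneg (hA i j) (hv j)

lemma mulVec_pos {A : Matrix (Fin n) (Fin n) ℝ} (hA : ∀ i j, 0 ≤ A i j)
    {v : Fin n → ℝ} (hv : ∀ i, 0 < v i) {i : Fin n} {j : Fin n} (hij : 0 < A i j) :
    0 < (A *ᵥ v) i := by
  have : 0 < A i j * v j := mul_pos hij (hv j)
  have hle : A i j * v j ≤ ∑ l, A i l * v l :=
    Finset.single_le_sum (fun l _ => mul_nonneg (hA i l) (le_of_lt (hv l)))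
      (Finset.mem_univ j)
  calc (0:ℝ) < A i j * v j := this
    _ ≤ _ := hle

lemma exists_pos_entry {A : Matrix (Fin n) (Fin n) ℝ} (hA : ∀ i j, 0 ≤ A i j)
    {i : Fin n} (h : rowSum A i ≠ 0) : ∃ j, 0 < A i j := by
  by_contra hc
  push_neg at hc
  exact h (Finset.sum_eq_zero fun j _ => le_antisymm (hc j) (hA i j))

lemma rowSum_pow_add (A : Matrix (Fin n) (Fin n) ℝ) (a b : ℕ) (i : Fin n) :
    rowSum (A ^ (a + b)) i = ((A ^ b) *ᵥ fun l => rowSum (A ^ a) l) i := by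
  rw [add_comm, pow_add]
  simp only [rowSum, Matrix.mulVec, dotProduct, Matrix.mul_apply, Finset.mul_sum]
  exact Finset.sum_comm

lemma rowSum_pow_pos {A : Matrix (Fin n) (Fin n) ℝ} (hA : ∀ i j, 0 ≤ A i j)
    (hr : ∀ i, rowSum A i ≠ 0) (m : ℕ) : ∀ i : Fin n, 0 < rowSum (A ^ m) i := by
  induction m with
  | zero => intro i; simp [rowSum, Matrix.one_apply]
  | succ m ih =>
      intro i
      have h1 : rowSum (A ^ (m + 1)) i = (A *ᵥ fun l => rowSum (A ^ m) l) i := by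
        have := rowSum_pow_add A m 1 i
        rwa [pow_one] at this
      rw [h1]
      obtain ⟨j, hj⟩ := exists_pos_entry hA (hr i)
      exact mulVec_pos hA ih hj

lemma rowSum_A_pos {A : Matrix (Fin n) (Fin n) ℝ} (hA : ∀ i j, 0 ≤ A i j)
    (hr : ∀ i, rowSum A i ≠ 0) (i : Fin n) : 0 < rowSum A i := by
  have := rowSum_pow_pos hA hr 1 i
  rwa [pow_one] at this

lemma pow_mulVec_eig {A : Matrix (Fin n) (Fin n) ℝ} {x : Fin n → ℝ} {c : ℝ}
    (h : A *ᵥ x = c • x) (m : ℕ) : (A ^ m) *ᵥ x = (c ^ m) • x := by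
  induction m with
  | zero => simp
  | succ m ih =>
      rw [pow_succ, ← Matrix.mulVec_mulVec, h, Matrix.mulVec_smul, ih, smul_smul, pow_succ,
        mul_comm]

lemma one_add_pow_mulVec_eig {B : Matrix (Fin n) (Fin n) ℝ} {x : Fin n → ℝ} {c : ℝ}
    (h : B *ᵥ x = c • x) (m : ℕ) :
    ((1 + B) ^ m) *ᵥ x = ((1 + c) ^ m) • x := by
  have h' : (1 + B) *ᵥ x = (1 + c) • x := by
    rw [Matrix.add_mulVec, Matrix.one_mulVec, h, add_smul, one_smul]
  exact pow_mulVec_eig h' m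

lemma irred_iter_pos {B : Matrix (Fin n) (Fin n) ℝ} (hB : ∀ i j, 0 ≤ B i j)
    (hirr : IsIrred B) {z : Fin n → ℝ} (hz : ∀ i, 0 ≤ z i) (hz0 : z ≠ 0) (i : Fin n) :
    0 < (((1 : Matrix (Fin n) (Fin n) ℝ) + B) ^ (n - 1) *ᵥ z) i := by
  classical
  set T : (Fin n → ℝ) → (Fin n → ℝ) := fun w => w + B *ᵥ w with hT
  have hstep : ∀ (w : Fin n → ℝ), ((1 : Matrix (Fin n) (Fin n) ℝ) + B) *ᵥ w = T w := by
    intro w; rw [Matrix.add_mulVec, Matrix.one_mulVec]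
  have hiter : ∀ m (w : Fin n → ℝ), (((1 : Matrix (Fin n) (Fin n) ℝ) + B) ^ m) *ᵥ w = T^[m] w := by
    intro m
    induction m with
    | zero => intro w; simp
    | succ m ih =>
        intro w
        rw [pow_succ, ← Matrix.mulVec_mulVec, hstep, ih, ← Function.iterate_succ_apply]
  set supp : (Fin n → ℝ) → Finset (Fin n) :=
    fun w => Finset.univ.filter (fun i => 0 < w i) with hsupp
  have hTnn : ∀ w : Fin n → ℝ, (∀ i, 0 ≤ w i) → ∀ i, 0 ≤ T w i := by
    intro w hw i
    exact add_nonneg (hw i) (mulVec_nonneg hB hw i)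
  have hTmono : ∀ w : Fin n → ℝ, (∀ i, 0 ≤ w i) → supp w ⊆ supp (T w) := by
    intro w hw i hi
    simp only [hsupp, Finset.mem_filter, Finset.mem_univ, true_and] at hi ⊢
    calc (0:ℝ) < w i := hi
      _ ≤ w i + (B *ᵥ w) i := le_add_of_nonneg_right (mulVec_nonneg hB hw i)
  have hgrow : ∀ w : Fin n → ℝ, (∀ i, 0 ≤ w i) → (supp w).Nonempty → supp w ≠ Finset.univ →
      supp w ⊂ supp (T w) := by
    intro w hw hne hnu
    have hS1 : ((↑(supp w) : Set (Fin n))ᶜ).Nonempty := by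
      obtain ⟨a, ha⟩ : ∃ a, a ∉ supp w := by
        by_contra hc
        push_neg at hc
        exact hnu (Finset.eq_univ_iff_forall.mpr hc)
      exact ⟨a, by simpa using ha⟩
    have hS2 : ((↑(supp w) : Set (Fin n))ᶜ) ≠ Set.univ := by
      obtain ⟨b, hb⟩ := hne
      intro hc
      have : b ∈ ((↑(supp w) : Set (Fin n))ᶜ) := hc ▸ Set.mem_univ b
      exact this (by simpa using hb)
    obtain ⟨i, hiS, j, hjS, hij⟩ := hirr _ hS1 hS2
    rw [Set.mem_compl_iff] at hiS
    rw [compl_compl] at hjS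
    have hjw : 0 < w j := by
      have := hjS
      simp only [Finset.coe_filter, Set.mem_setOf_eq, hsupp] at this
      exact this.2
    have hBij : 0 < B i j := lt_of_le_of_ne (hB i j) (Ne.symm hij)
    have hTi : 0 < T w i := by
      have h1 : 0 < (B *ᵥ w) i := by
        have hle : B i j * w j ≤ ∑ l, B i l * w l :=
          Finset.single_le_sum (fun l _ => mul_nonneg (hB i l) (hw l)) (Finset.mem_univ j)
        have := mul_pos hBij hjw
        simpa only [Matrix.mulVec, dotProduct] using lt_of_lt_of_le this hle
      exact add_pos_of_nonneg_of_pos (hw i) h1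
    rw [Finset.ssubset_iff_of_subset (hTmono w hw)]
    refine ⟨i, ?_, ?_⟩
    · simp only [hsupp, Finset.mem_filter, Finset.mem_univ, true_and]
      exact hTi
    · intro hc
      exact hiS (by exact_mod_cast hc)
  -- main induction
  have hn1 : 0 < n := Fin.pos i
  have hs0 : 0 < (supp z).card := by
    rw [Finset.card_pos]
    obtain ⟨a, ha⟩ := Function.ne_iff.mp hz0
    refine ⟨a, ?_⟩
    simp only [hsupp, Finset.mem_filter, Finset.mem_univ, true_and]
    exact lt_of_le_of_ne (hz a) (Ne.symm (by simpa using ha))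
  have key : ∀ m : ℕ, (∀ i, 0 ≤ (T^[m] z) i) ∧
      min n ((supp z).card + m) ≤ (supp (T^[m] z)).card := by
    intro m
    induction m with
    | zero => exact ⟨hz, by simpa using Finset.card_le_univ _⟩
    | succ m ih =>
        obtain ⟨hwnn, hcard⟩ := ih
        set w := T^[m] z with hw
        have hnext : T^[m+1] z = T w := by rw [Function.iterate_succ_apply']
        refine ⟨hnext ▸ hTnn w hwnn, ?_⟩
        by_cases hu : supp w = Finset.univ
        · have : supp (T w) = Finset.univ :=
            Finset.univ_subset_iff.mp (hu ▸ hTmono w hwnn)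
          rw [hnext, this]
          simp [Finset.card_univ]
        · have hne : (supp w).Nonempty := by
            rw [← Finset.card_pos]
            calc 0 < min n ((supp z).card + m) := lt_min hn1 (by omega)
              _ ≤ _ := hcard
          have hlt := Finset.card_lt_card (hgrow w hwnn hne hu)
          rw [hnext]
          omega
  obtain ⟨hnn, hcard⟩ := key (n - 1)
  have hall : supp (T^[n-1] z) = Finset.univ := by
    rw [← Finset.card_eq_iff_eq_univ]
    have h1 : (supp (T^[n-1] z)).card ≤ n := by
      simpa using Finset.card_le_univ (supp (T^[n-1] z))
    simp only [Fintype.card_fin]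
    omega
  have : i ∈ supp (T^[n-1] z) := hall ▸ Finset.mem_univ i
  simp only [hsupp, Finset.mem_filter, Finset.mem_univ, true_and] at this
  rw [hiter]
  exact this


/-- complexification -/
noncomputable def cplx (A : Matrix (Fin n) (Fin n) ℝ) : Matrix (Fin n) (Fin n) ℂ :=
  A.map (fun x : ℝ => (x : ℂ))

lemma specRad_def (A : Matrix (Fin n) (Fin n) ℝ) :
    specRad A = sSup ((fun μ : ℂ => ‖μ‖) '' spectrum ℂ (cplx A)) := rfl

lemma cplx_pow (A : Matrix (Fin n) (Fin n) ℝ) (m : ℕ) : cplx (A ^ m) = (cplx A) ^ m := by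
  have h : ∀ X : Matrix (Fin n) (Fin n) ℝ, cplx X = (Complex.ofRealHom.mapMatrix : Matrix (Fin n) (Fin n) ℝ →+* Matrix (Fin n) (Fin n) ℂ) X := fun X => rfl
  rw [h, h, map_pow]

attribute [local instance] Matrix.linftyOpNormedRing Matrix.linftyOpNormedAlgebra

lemma spec_nonempty (hn : 0 < n) (B : Matrix (Fin n) (Fin n) ℂ) :
    (spectrum ℂ B).Nonempty := by
  haveI : Nonempty (Fin n) := Fin.pos_iff_nonempty.mp hn
  exact spectrum.nonempty B

lemma mem_spectrum_iff_eigen (B : Matrix (Fin n) (Fin n) ℂ) (μ : ℂ) :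
    μ ∈ spectrum ℂ B ↔ ∃ v : Fin n → ℂ, v ≠ 0 ∧ B.mulVec v = μ • v := by
  rw [← AlgEquiv.spectrum_eq (Matrix.toLinAlgEquiv' (R := ℂ)) B,
      ← Module.End.hasEigenvalue_iff_mem_spectrum]
  constructor
  · intro h
    obtain ⟨v, hv⟩ := h.exists_hasEigenvector
    have h2 := Module.End.mem_eigenspace_iff.mp hv.1
    rw [Matrix.toLinAlgEquiv'_apply] at h2
    exact ⟨v, hv.2, h2⟩
  · rintro ⟨v, hv0, hv⟩
    exact Module.End.hasEigenvalue_of_hasEigenvector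
      ⟨Module.End.mem_eigenspace_iff.mpr (by rw [Matrix.toLinAlgEquiv'_apply]; exact hv), hv0⟩

lemma abs_image_bddAbove (B : Matrix (Fin n) (Fin n) ℂ) :
    BddAbove ((fun μ : ℂ => ‖μ‖) '' spectrum ℂ B) :=
  ((spectrum.isCompact B).image continuous_norm).bddAbove

lemma abs_le_specRad {A : Matrix (Fin n) (Fin n) ℝ} {μ : ℂ}
    (h : μ ∈ spectrum ℂ (cplx A)) : ‖μ‖ ≤ specRad A :=
  le_csSup (abs_image_bddAbove _) (Set.mem_image_of_mem _ h)

lemma specRad_nonneg (A : Matrix (Fin n) (Fin n) ℝ) : 0 ≤ specRad A := by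
  rcases Set.eq_empty_or_nonempty (spectrum ℂ (cplx A)) with h | ⟨μ, hμ⟩
  · rw [specRad_def, h]
    simp [Real.sSup_empty]
  · exact le_trans (norm_nonneg μ) (abs_le_specRad hμ)

lemma specRad_pow (hn : 0 < n) (A : Matrix (Fin n) (Fin n) ℝ) (m : ℕ) :
    specRad (A ^ m) = specRad A ^ m := by
  rw [specRad_def, specRad_def, cplx_pow,
    spectrum.map_pow_of_nonempty (spec_nonempty hn (cplx A)) m]
  rw [Set.image_image]
  have h1 : (fun μ : ℂ => ‖μ ^ m‖) = (fun t : ℝ => t ^ m) ∘ (fun μ : ℂ => ‖μ‖) := by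
    funext μ; simp [norm_pow]
  rw [h1, Set.image_comp]
  set s := (fun μ : ℂ => ‖μ‖) '' spectrum ℂ (cplx A) with hs
  have hsne : s.Nonempty := (spec_nonempty hn (cplx A)).image _
  have hscpt : IsCompact s := (spectrum.isCompact (cplx A)).image continuous_norm
  have hgr : IsGreatest s (sSup s) := ⟨hscpt.sSup_mem hsne, fun t ht => le_csSup hscpt.bddAbove ht⟩
  have hnn : ∀ t ∈ s, (0:ℝ) ≤ t := by
    rintro t ⟨μ, _, rfl⟩; exact norm_nonneg μ
  have hgr2 : IsGreatest ((fun t : ℝ => t ^ m) '' s) (sSup s ^ m) := by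
    constructor
    · exact Set.mem_image_of_mem _ hgr.1
    · rintro t ⟨u, hu, rfl⟩
      exact pow_le_pow_left₀ (hnn u hu) (hgr.2 hu) m
  exact hgr2.csSup_eq

lemma specRad_le_of_subinv (hn : 0 < n) {B : Matrix (Fin n) (Fin n) ℝ}
    (hB : ∀ i j, 0 ≤ B i j) {w : Fin n → ℝ} (hw : ∀ i, 0 < w i) {c : ℝ}
    (h : ∀ i, (B *ᵥ w) i ≤ c * w i) : specRad B ≤ c := by
  haveI : Nonempty (Fin n) := Fin.pos_iff_nonempty.mp hn
  rw [specRad_def]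
  apply csSup_le ((spec_nonempty hn (cplx B)).image _)
  rintro t ⟨μ, hμ, rfl⟩
  obtain ⟨v, hv0, hv⟩ := (mem_spectrum_iff_eigen (cplx B) μ).mp hμ
  obtain ⟨i, -, hmax⟩ := Finset.exists_max_image Finset.univ
    (fun l => ‖v l‖ / w l) Finset.univ_nonempty
  set m := ‖v i‖ / w i with hm
  have hmpos : 0 < m := by
    obtain ⟨a, ha⟩ := Function.ne_iff.mp hv0
    have h1 : 0 < ‖v a‖ / w a :=
      div_pos (norm_pos_iff.mpr (by simpa using ha)) (hw a)
    exact lt_of_lt_of_le h1 (hmax a (Finset.mem_univ a))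
  have hvb : ∀ l, ‖v l‖ ≤ m * w l := fun l =>
    (div_le_iff₀ (hw l)).mp (hmax l (Finset.mem_univ l))
  have hkey : ‖μ‖ * (m * w i) ≤ c * (m * w i) := by
    have hmw : ‖v i‖ = m * w i := by
      rw [hm, div_mul_cancel₀]
      exact ne_of_gt (hw i)
    have h0 : ((cplx B).mulVec v) i = μ * v i := by
      rw [hv]; rfl
    calc ‖μ‖ * (m * w i) = ‖μ * v i‖ := by
          rw [norm_mul, hmw]
      _ = ‖∑ j, (B i j : ℂ) * v j‖ := by
          rw [← h0]; rfl
      _ ≤ ∑ j, ‖(B i j : ℂ) * v j‖ := by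
          exact norm_sum_le _ _
      _ = ∑ j, B i j * ‖v j‖ := by
          refine Finset.sum_congr rfl fun j _ => ?_
          rw [norm_mul, Complex.norm_real, Real.norm_of_nonneg (hB i j)]
      _ ≤ ∑ j, B i j * (m * w j) := by
          exact Finset.sum_le_sum fun j _ => mul_le_mul_of_nonneg_left (hvb j) (hB i j)
      _ = m * ∑ j, B i j * w j := by
          rw [Finset.mul_sum]; exact Finset.sum_congr rfl fun j _ => by ring
      _ = m * (B *ᵥ w) i := rfl
      _ ≤ m * (c * w i) := mul_le_mul_of_nonneg_left (h i) (le_of_lt hmpos)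
      _ = c * (m * w i) := by ring
  exact le_of_mul_le_mul_right hkey (mul_pos hmpos (hw i))

lemma specRad_ge_of_superinv (hn : 0 < n) {B : Matrix (Fin n) (Fin n) ℝ}
    (hB : ∀ i j, 0 ≤ B i j) (hBp : ∀ m i j, 0 ≤ (B ^ m) i j) {w : Fin n → ℝ}
    (hw : ∀ i, 0 < w i) {c : ℝ} (hc : 0 ≤ c)
    (h : ∀ i, c * w i ≤ (B *ᵥ w) i) : c ≤ specRad B := by
  haveI : Nonempty (Fin n) := Fin.pos_iff_nonempty.mp hn
  -- iterated subinvariance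
  have hpow : ∀ m i, c ^ m * w i ≤ ((B ^ m) *ᵥ w) i := by
    intro m
    induction m with
    | zero => intro i; simp [Matrix.one_mulVec]
    | succ m ih =>
        intro i
        have h1 : ((B ^ (m+1)) *ᵥ w) i = (B *ᵥ ((B ^ m) *ᵥ w)) i := by
          rw [Matrix.mulVec_mulVec, ← pow_succ']
        rw [h1]
        have h2 : (B *ᵥ (fun j => c ^ m * w j)) i ≤ (B *ᵥ ((B ^ m) *ᵥ w)) i := by
          simp only [Matrix.mulVec, dotProduct]
          exact Finset.sum_le_sum fun j _ =>
            mul_le_mul_of_nonneg_left (ih j) (hB i j)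
        have h3 : (B *ᵥ (fun j => c ^ m * w j)) i = c ^ m * (B *ᵥ w) i := by
          simp only [Matrix.mulVec, dotProduct, Finset.mul_sum]
          exact Finset.sum_congr rfl fun j _ => by ring
        calc c ^ (m+1) * w i = c ^ m * (c * w i) := by ring
          _ ≤ c ^ m * (B *ᵥ w) i :=
            mul_le_mul_of_nonneg_left (h i) (pow_nonneg hc m)
          _ = (B *ᵥ (fun j => c ^ m * w j)) i := h3.symm
          _ ≤ _ := h2
  obtain ⟨i0⟩ : Nonempty (Fin n) := inferInstance
  set W := Finset.univ.sup' Finset.univ_nonempty w with hW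
  have hWpos : 0 < W := lt_of_lt_of_le (hw i0) (Finset.le_sup' w (Finset.mem_univ i0))
  set δ := w i0 / W with hδ
  have hδpos : 0 < δ := div_pos (hw i0) hWpos
  -- norm lower bound
  have hnorm : ∀ m, δ * c ^ m ≤ ‖cplx (B ^ m)‖ := by
    intro m
    have hsum : c ^ m * w i0 ≤ W * ∑ j, (B ^ m) i0 j := by
      have h1 := hpow m i0
      have h2 : ((B ^ m) *ᵥ w) i0 ≤ ∑ j, (B ^ m) i0 j * W := by
        simp only [Matrix.mulVec, dotProduct]
        exact Finset.sum_le_sum fun j _ => mul_le_mul_of_nonneg_left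
          (Finset.le_sup' w (Finset.mem_univ j)) (hBp m i0 j)
      calc c ^ m * w i0 ≤ ∑ j, (B ^ m) i0 j * W := le_trans h1 h2
        _ = W * ∑ j, (B ^ m) i0 j := by rw [← Finset.sum_mul]; exact mul_comm _ _
    have hrow : δ * c ^ m ≤ ∑ j, (B ^ m) i0 j := by
      rw [hδ, div_mul_eq_mul_div, div_le_iff₀ hWpos]
      calc w i0 * c ^ m = c ^ m * w i0 := by ring
        _ ≤ W * ∑ j, (B ^ m) i0 j := hsum
        _ = (∑ j, (B ^ m) i0 j) * W := by ring
    have hnn : (Finset.univ.sup fun i => ∑ j, ‖(cplx (B ^ m)) i j‖₊) = ‖cplx (B ^ m)‖₊ :=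
      (Matrix.linfty_opNNNorm_def (cplx (B ^ m))).symm
    have hle : (∑ j, ‖(cplx (B ^ m)) i0 j‖₊) ≤ ‖cplx (B ^ m)‖₊ := by
      rw [← hnn]
      exact Finset.le_sup (f := fun i => ∑ j, ‖(cplx (B ^ m)) i j‖₊) (Finset.mem_univ i0)
    have hco : ((∑ j, ‖(cplx (B ^ m)) i0 j‖₊ : NNReal) : ℝ) = ∑ j, (B ^ m) i0 j := by
      push_cast
      refine Finset.sum_congr rfl fun j _ => ?_
      have : (cplx (B ^ m)) i0 j = ((B ^ m) i0 j : ℂ) := rfl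
      rw [this, Complex.norm_real, Real.norm_of_nonneg (hBp m i0 j)]
    calc δ * c ^ m ≤ ∑ j, (B ^ m) i0 j := hrow
      _ = ((∑ j, ‖(cplx (B ^ m)) i0 j‖₊ : NNReal) : ℝ) := hco.symm
      _ ≤ (‖cplx (B ^ m)‖₊ : ℝ) := NNReal.coe_le_coe.mpr hle
      _ = ‖cplx (B ^ m)‖ := rfl
  -- Gelfand's formula
  have hG := spectrum.pow_nnnorm_pow_one_div_tendsto_nhds_spectralRadius (cplx B)
  have hLle : spectralRadius ℂ (cplx B) ≤ ENNReal.ofReal (specRad B) := by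
    have hdef : spectralRadius ℂ (cplx B) = ⨆ μ ∈ spectrum ℂ (cplx B), (‖μ‖₊ : ENNReal) := rfl
    rw [hdef]
    refine iSup₂_le fun μ hμ => ?_
    have h1 : (‖μ‖₊ : ENNReal) = ENNReal.ofReal ‖μ‖ := (ENNReal.ofReal_eq_coe_nnreal (norm_nonneg μ)).symm
    rw [h1]
    exact ENNReal.ofReal_le_ofReal (abs_le_specRad hμ)
  rw [← ENNReal.ofReal_le_ofReal_iff (specRad_nonneg B)]
  refine le_trans ?_ hLle
  refine ENNReal.le_of_forall_nnreal_lt fun r hr => ?_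
  have hrc : (r : ℝ) < c := by
    rw [ENNReal.ofReal_eq_coe_nnreal hc, ENNReal.coe_lt_coe] at hr
    calc (r : ℝ) < (⟨c, hc⟩ : NNReal) := NNReal.coe_lt_coe.mpr hr
      _ = c := rfl
  rcases eq_or_lt_of_le (show (0:NNReal) ≤ r from by positivity) with hr0 | hr0
  · rw [← hr0]; simp
  · have hrpos : (0:ℝ) < r := hr0
    have hone : (1:ℝ) < c / r := (one_lt_div hrpos).mpr hrc
    have hev1 : ∀ᶠ m : ℕ in atTop, 1 / δ ≤ (c / (r:ℝ)) ^ m :=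
      (tendsto_pow_atTop_atTop_of_one_lt hone).eventually_ge_atTop (1/δ)
    have hev2 : ∀ᶠ m : ℕ in atTop, 1 ≤ m := eventually_ge_atTop 1
    have hev : ∀ᶠ m : ℕ in atTop,
        (r : ENNReal) ≤ (‖(cplx B) ^ m‖₊ : ENNReal) ^ (1 / (m:ℝ)) := by
      filter_upwards [hev1, hev2] with m h1 h2
      have hrm : ((r:ℝ)) ^ m ≤ δ * c ^ m := by
        have hcm : c ^ m = (c / r) ^ m * (r:ℝ) ^ m := by
          rw [div_pow, div_mul_cancel₀]
          exact pow_ne_zero m (ne_of_gt hrpos)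
        rw [hcm, ← mul_assoc]
        have : 1 ≤ δ * (c / (r:ℝ)) ^ m := by
          calc (1:ℝ) = δ * (1/δ) := by field_simp
            _ ≤ δ * (c / (r:ℝ)) ^ m := mul_le_mul_of_nonneg_left h1 (le_of_lt hδpos)
        nlinarith [pow_nonneg (le_of_lt hrpos) m]
      have hnrm : ((r : NNReal) : ENNReal) ^ m ≤ (‖(cplx B) ^ m‖₊ : ENNReal) := by
        rw [← cplx_pow]
        rw [← ENNReal.coe_pow, ENNReal.coe_le_coe, ← NNReal.coe_le_coe]
        push_cast
        exact le_trans hrm (hnorm m)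
      calc (r : ENNReal) = ((r : ENNReal) ^ m) ^ (1 / (m:ℝ)) := by
            rw [← ENNReal.rpow_natCast, ← ENNReal.rpow_mul, mul_one_div_cancel
              (by exact_mod_cast Nat.one_le_iff_ne_zero.mp h2 : (m:ℝ) ≠ 0), ENNReal.rpow_one]
        _ ≤ _ := ENNReal.rpow_le_rpow hnrm (by positivity)
    exact ge_of_tendsto hG hev


lemma real_eigen_mem_spectrum {A : Matrix (Fin n) (Fin n) ℝ} {x : Fin n → ℝ} {μ : ℝ}
    (hx0 : x ≠ 0) (hx : A *ᵥ x = μ • x) : (μ:ℂ) ∈ spectrum ℂ (cplx A) := by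
  rw [mem_spectrum_iff_eigen]
  refine ⟨fun i => (x i : ℂ), ?_, ?_⟩
  · obtain ⟨a, ha⟩ := Function.ne_iff.mp hx0
    intro hcon
    have := congrFun hcon a
    simp only [Pi.zero_apply, Complex.ofReal_eq_zero] at this
    exact ha (by simpa using this)
  · funext i
    have h1 := congrFun hx i
    simp only [Matrix.mulVec, dotProduct, Pi.smul_apply, smul_eq_mul] at h1 ⊢
    simp only [cplx, Matrix.map_apply]
    exact_mod_cast h1

lemma rpow_val_le {c β : ℝ} (hc : 0 < c) (hβ : 0 ≤ β) {q : ℕ} (hq : 0 < q)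
    (h : c ^ ((q:ℝ))⁻¹ ≤ β) : c ≤ β ^ q := by
  have hqne : ((q:ℝ)) ≠ 0 := Nat.cast_ne_zero.mpr (Nat.pos_iff_ne_zero.mp hq)
  have h2 := Real.rpow_le_rpow (Real.rpow_nonneg hc.le _) h (Nat.cast_nonneg q)
  rw [← Real.rpow_mul hc.le, inv_mul_cancel₀ hqne, Real.rpow_one, Real.rpow_natCast] at h2
  exact h2
  
lemma rpow_val_ge {c β : ℝ} (hc : 0 < c) (hβ : 0 ≤ β) {q : ℕ} (hq : 0 < q)
    (h : β ≤ c ^ ((q:ℝ))⁻¹) : β ^ q ≤ c := by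
  have hqne : ((q:ℝ)) ≠ 0 := Nat.cast_ne_zero.mpr (Nat.pos_iff_ne_zero.mp hq)
  have h2 := Real.rpow_le_rpow hβ h (Nat.cast_nonneg q)
  rw [← Real.rpow_mul hc.le, inv_mul_cancel₀ hqne, Real.rpow_one, Real.rpow_natCast] at h2
  exact h2

lemma rpow_val_eq {μ : ℝ} (hμ : 0 < μ) {q : ℕ} (hq : 0 < q) :
    ((μ ^ q : ℝ)) ^ ((q:ℝ))⁻¹ = μ := by
  have hqne : ((q:ℝ)) ≠ 0 := Nat.cast_ne_zero.mpr (Nat.pos_iff_ne_zero.mp hq)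
  rw [← Real.rpow_natCast μ q, ← Real.rpow_mul hμ.le, mul_inv_cancel₀ hqne, Real.rpow_one]

lemma fix_of_upper (hn : 0 < n) {B : Matrix (Fin n) (Fin n) ℝ}
    (hBnn : ∀ i j, 0 ≤ B i j) (hirrB : IsIrred B) {x : Fin n → ℝ}
    (hxpos : ∀ i, 0 < x i) {c : ℝ} (hceq : specRad B = c)
    (hble : ∀ i, (B *ᵥ x) i ≤ c * x i) : B *ᵥ x = c • x := by
  haveI : Nonempty (Fin n) := Fin.pos_iff_nonempty.mp hn
  set z : Fin n → ℝ := c • x - B *ᵥ x with hzdef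
  have hznn : ∀ i, 0 ≤ z i := by
    intro i
    simp only [hzdef, Pi.sub_apply, Pi.smul_apply, smul_eq_mul, sub_nonneg]
    exact hble i
  have hz0 : z = 0 := by
    by_contra hz0
    set C := ((1 : Matrix (Fin n) (Fin n) ℝ) + B) ^ (n - 1) with hC
    have hCz : ∀ i, 0 < (C *ᵥ z) i := irred_iter_pos hBnn hirrB hznn hz0
    have hxne : x ≠ 0 := by
      intro hcon
      have := congrFun hcon (Classical.arbitrary (Fin n))
      exact absurd this (ne_of_gt (hxpos _))
    have hCx : ∀ i, 0 < (C *ᵥ x) i :=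
      irred_iter_pos hBnn hirrB (fun i => (hxpos i).le) hxne
    have hcomm : C * B = B * C :=
      (Commute.pow_left (((Commute.one_left B).add_left (Commute.refl B))) (n-1))
    have hvec : C *ᵥ z = c • (C *ᵥ x) - B *ᵥ (C *ᵥ x) := by
      rw [hzdef, Matrix.mulVec_sub, Matrix.mulVec_smul, Matrix.mulVec_mulVec, hcomm,
        ← Matrix.mulVec_mulVec]
    set ε := Finset.univ.inf' Finset.univ_nonempty (fun i => (C *ᵥ z) i / (C *ᵥ x) i) with hε
    have hεpos : 0 < ε := by
      rw [hε, Finset.lt_inf'_iff]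
      exact fun i _ => div_pos (hCz i) (hCx i)
    have hble2 : ∀ i, (B *ᵥ (C *ᵥ x)) i ≤ (c - ε) * (C *ᵥ x) i := by
      intro i
      have h1 : ε ≤ (C *ᵥ z) i / (C *ᵥ x) i :=
        Finset.inf'_le _ (Finset.mem_univ i)
      have h2 : ε * (C *ᵥ x) i ≤ (C *ᵥ z) i := (le_div_iff₀ (hCx i)).mp h1
      have h3 := congrFun hvec i
      simp only [Pi.sub_apply, Pi.smul_apply, smul_eq_mul] at h3
      nlinarith
    have := specRad_le_of_subinv hn hBnn hCx hble2
    rw [hceq] at this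
    nlinarith
  funext i
  have := congrFun hz0 i
  simp only [hzdef, Pi.sub_apply, Pi.zero_apply, Pi.smul_apply, smul_eq_mul] at this ⊢
  linarith

lemma fix_of_lower (hn : 0 < n) {B : Matrix (Fin n) (Fin n) ℝ}
    (hBnn : ∀ i j, 0 ≤ B i j) (hirrB : IsIrred B) {x : Fin n → ℝ}
    (hxpos : ∀ i, 0 < x i) {c : ℝ} (hc : 0 ≤ c) (hceq : specRad B = c)
    (hble : ∀ i, c * x i ≤ (B *ᵥ x) i) : B *ᵥ x = c • x := by
  haveI : Nonempty (Fin n) := Fin.pos_iff_nonempty.mp hn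
  set z : Fin n → ℝ := B *ᵥ x - c • x with hzdef
  have hznn : ∀ i, 0 ≤ z i := by
    intro i
    simp only [hzdef, Pi.sub_apply, Pi.smul_apply, smul_eq_mul, sub_nonneg]
    exact hble i
  have hz0 : z = 0 := by
    by_contra hz0
    set C := ((1 : Matrix (Fin n) (Fin n) ℝ) + B) ^ (n - 1) with hC
    have hCz : ∀ i, 0 < (C *ᵥ z) i := irred_iter_pos hBnn hirrB hznn hz0
    have hxne : x ≠ 0 := by
      intro hcon
      have := congrFun hcon (Classical.arbitrary (Fin n))
      exact absurd this (ne_of_gt (hxpos _))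
    have hCx : ∀ i, 0 < (C *ᵥ x) i :=
      irred_iter_pos hBnn hirrB (fun i => (hxpos i).le) hxne
    have hcomm : C * B = B * C :=
      (Commute.pow_left (((Commute.one_left B).add_left (Commute.refl B))) (n-1))
    have hvec : C *ᵥ z = B *ᵥ (C *ᵥ x) - c • (C *ᵥ x) := by
      rw [hzdef, Matrix.mulVec_sub, Matrix.mulVec_smul, Matrix.mulVec_mulVec, hcomm,
        ← Matrix.mulVec_mulVec]
    set ε := Finset.univ.inf' Finset.univ_nonempty (fun i => (C *ᵥ z) i / (C *ᵥ x) i) with hε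
    have hεpos : 0 < ε := by
      rw [hε, Finset.lt_inf'_iff]
      exact fun i _ => div_pos (hCz i) (hCx i)
    have hble2 : ∀ i, (c + ε) * (C *ᵥ x) i ≤ (B *ᵥ (C *ᵥ x)) i := by
      intro i
      have h1 : ε ≤ (C *ᵥ z) i / (C *ᵥ x) i :=
        Finset.inf'_le _ (Finset.mem_univ i)
      have h2 : ε * (C *ᵥ x) i ≤ (C *ᵥ z) i := (le_div_iff₀ (hCx i)).mp h1
      have h3 := congrFun hvec i
      simp only [Pi.sub_apply, Pi.smul_apply, smul_eq_mul] at h3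
      nlinarith
    have := specRad_ge_of_superinv hn hBnn (pow_entry_nonneg hBnn) hCx
      (by positivity : (0:ℝ) ≤ c + ε) hble2
    rw [hceq] at this
    nlinarith
  funext i
  have := congrFun hz0 i
  simp only [hzdef, Pi.sub_apply, Pi.zero_apply, Pi.smul_apply, smul_eq_mul] at this ⊢
  linarith

lemma step6 (hn : 0 < n) {A B : Matrix (Fin n) (Fin n) ℝ}
    (hBnn : ∀ i j, 0 ≤ B i j) (hirrB : IsIrred B) (hcomm : A * B = B * A)
    {x : Fin n → ℝ} (hxpos : ∀ i, 0 < x i) (hAx : ∀ i, 0 < (A *ᵥ x) i)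
    {c : ℝ} (hc : 0 ≤ c) (hfix : B *ᵥ x = c • x) : ∃ μ : ℝ, A *ᵥ x = μ • x := by
  haveI : Nonempty (Fin n) := Fin.pos_iff_nonempty.mp hn
  set w := A *ᵥ x with hwdef
  have hBw : B *ᵥ w = c • w := by
    rw [hwdef, Matrix.mulVec_mulVec, ← hcomm, ← Matrix.mulVec_mulVec, hfix,
      Matrix.mulVec_smul]
  obtain ⟨i0, -, hi0⟩ := Finset.exists_mem_eq_inf' (Finset.univ_nonempty) (fun i => w i / x i)
  have hile : ∀ i, w i0 / x i0 ≤ w i / x i := by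
    intro i
    rw [← hi0]
    exact Finset.inf'_le _ (Finset.mem_univ i)
  set t := w i0 / x i0 with ht
  have htpos : 0 < t := div_pos (hAx i0) (hxpos i0)
  set z := w - t • x with hzdef
  have hznn : ∀ i, 0 ≤ z i := by
    intro i
    have h1 : t ≤ w i / x i := hile i
    have h2 : t * x i ≤ w i := (le_div_iff₀ (hxpos i)).mp h1
    simp only [hzdef, Pi.sub_apply, Pi.smul_apply, smul_eq_mul, sub_nonneg]
    exact h2
  have hzi0 : z i0 = 0 := by
    have h2 : t * x i0 = w i0 := by
      rw [ht, div_mul_cancel₀]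
      exact ne_of_gt (hxpos i0)
    simp only [hzdef, Pi.sub_apply, Pi.smul_apply, smul_eq_mul]
    linarith
  have hBz : B *ᵥ z = c • z := by
    rw [hzdef, Matrix.mulVec_sub, hBw, Matrix.mulVec_smul, hfix]
    funext i
    simp only [Pi.sub_apply, Pi.smul_apply, smul_eq_mul]
    ring
  by_cases hz0 : z = 0
  · refine ⟨t, ?_⟩
    have : w - t • x = 0 := hzdef ▸ hz0
    rw [hwdef] at this ⊢
    funext i
    have h2 := congrFun this i
    simp only [Pi.sub_apply, Pi.zero_apply, Pi.smul_apply, smul_eq_mul] at h2 ⊢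
    linarith
  · exfalso
    have hpos := irred_iter_pos hBnn hirrB hznn hz0 i0
    have hCz := one_add_pow_mulVec_eig hBz (n - 1)
    rw [hCz] at hpos
    simp only [Pi.smul_apply, smul_eq_mul, hzi0, mul_zero] at hpos
    exact lt_irrefl 0 hpos

end Stmt7

/-- Theorem 7 of the paper, equality part.
For a nonnegative matrix `A` with nonzero row sums, `M > 0`, `N ≥ 0`, `k ≥ 0`, such that
`A^{M+N}` is irreducible, equality holds on either side (and hence both sides) of the
generalized Xu–Xu bound iff `x = (r_1(A^k),…,r_n(A^k))ᵀ` is an eigenvector of `A`. -/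
theorem stmt7 {n : ℕ} (A : Matrix (Fin n) (Fin n) ℝ)
    (hA : ∀ i j, 0 ≤ A i j) (hr : ∀ i, rowSum A i ≠ 0) (M N k : ℕ) (hM : 0 < M)
    (hirr : IsIrred (A ^ (M + N))) :
    (specRad A = sSup {x : ℝ | ∃ i j : Fin n, 0 < (A ^ M) i j ∧
        x = (rowSum (A ^ (k + M)) i * rowSum (A ^ (k + N)) j /
              (rowSum (A ^ k) i * rowSum (A ^ k) j)) ^ (((M : ℝ) + N))⁻¹} ↔
      ∃ μ : ℝ, A.mulVec (fun i => rowSum (A ^ k) i) = μ • fun i => rowSum (A ^ k) i) ∧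
    (specRad A = sInf {x : ℝ | ∃ i j : Fin n, 0 < (A ^ M) i j ∧
        x = (rowSum (A ^ (k + M)) i * rowSum (A ^ (k + N)) j /
              (rowSum (A ^ k) i * rowSum (A ^ k) j)) ^ (((M : ℝ) + N))⁻¹} ↔
      ∃ μ : ℝ, A.mulVec (fun i => rowSum (A ^ k) i) = μ • fun i => rowSum (A ^ k) i) := by
  open Stmt7 in
  rcases Nat.eq_zero_or_pos n with hn | hn
  · subst hn
    have hS : {x : ℝ | ∃ i j : Fin 0, 0 < (A ^ M) i j ∧
        x = (rowSum (A ^ (k + M)) i * rowSum (A ^ (k + N)) j /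
              (rowSum (A ^ k) i * rowSum (A ^ k) j)) ^ (((M : ℝ) + N))⁻¹} = ∅ :=
      Set.eq_empty_iff_forall_notMem.mpr (by rintro s ⟨i, -⟩; exact i.elim0)
    have hspec0 : specRad A = 0 := by
      haveI : Subsingleton (Matrix (Fin 0) (Fin 0) ℂ) :=
        ⟨fun a b => by ext i j; exact i.elim0⟩
      have h1 : spectrum ℂ (A.map (fun x : ℝ => (x : ℂ))) = ∅ := by
        ext μ
        simp only [Set.mem_empty_iff_false, iff_false]
        intro hmem
        rw [spectrum.mem_iff] at hmem
        exact hmem (isUnit_of_subsingleton _)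
      simp only [specRad, h1, Set.image_empty, Real.sSup_empty]
    have hEig : ∃ μ : ℝ, A.mulVec (fun i => rowSum (A ^ k) i) =
        μ • fun i => rowSum (A ^ k) i := ⟨0, funext fun i => i.elim0⟩
    constructor
    · exact iff_of_true (by rw [hspec0, hS, Real.sSup_empty]) hEig
    · exact iff_of_true (by rw [hspec0, hS, Real.sInf_empty]) hEig
  · haveI : Nonempty (Fin n) := Fin.pos_iff_nonempty.mp hn
    set q := M + N with hqdef
    have hq : 0 < q := by omega
    have hcastq : ((M : ℝ) + N) = (q : ℝ) := by rw [hqdef]; push_cast; ring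
    set S := {x : ℝ | ∃ i j : Fin n, 0 < (A ^ M) i j ∧
        x = (rowSum (A ^ (k + M)) i * rowSum (A ^ (k + N)) j /
              (rowSum (A ^ k) i * rowSum (A ^ k) j)) ^ (((M : ℝ) + N))⁻¹} with hSdef
    set x : Fin n → ℝ := fun i => rowSum (A ^ k) i with hxdef
    have hxpos : ∀ i, 0 < x i := fun i => rowSum_pow_pos hA hr k i
    have hxk : ∀ l, rowSum (A ^ k) l = x l := fun l => rfl
    have hxne : x ≠ 0 := fun hcon =>
      absurd (congrFun hcon (Classical.arbitrary _)) (ne_of_gt (hxpos _))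
    have hAM : ∀ i j, 0 ≤ (A ^ M) i j := pow_entry_nonneg hA M
    have hu : ∀ i, rowSum (A ^ (k + M)) i = ((A ^ M) *ᵥ x) i := rowSum_pow_add A k M
    have hv : ∀ j, rowSum (A ^ (k + N)) j = ((A ^ N) *ᵥ x) j := rowSum_pow_add A k N
    have hupos : ∀ i, 0 < rowSum (A ^ (k + M)) i := rowSum_pow_pos hA hr (k + M)
    have hvpos : ∀ j, 0 < rowSum (A ^ (k + N)) j := rowSum_pow_pos hA hr (k + N)
    have hAxpos : ∀ i, 0 < (A *ᵥ x) i := by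
      intro i
      have h1 := rowSum_pow_pos hA hr (k + 1) i
      rw [rowSum_pow_add A k 1, pow_one] at h1
      exact h1
    have hBnn : ∀ i j, 0 ≤ (A ^ q) i j := pow_entry_nonneg hA q
    have hcommAB : A * (A ^ q) = (A ^ q) * A := ((Commute.refl A).pow_right q).eq
    have hBxv : (A ^ q) *ᵥ x = (A ^ M) *ᵥ ((A ^ N) *ᵥ x) := by
      rw [Matrix.mulVec_mulVec, ← pow_add, hqdef]
    have hSnonneg : ∀ s ∈ S, 0 ≤ s := by
      rintro s ⟨i, j, -, rfl⟩
      exact Real.rpow_nonneg (div_nonneg (mul_nonneg (hupos i).le (hvpos j).le)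
        (mul_nonneg (rowSum_pow_pos hA hr k i).le (rowSum_pow_pos hA hr k j).le)) _
    have hSsub : S ⊆ Set.range (fun p : Fin n × Fin n =>
        (rowSum (A ^ (k + M)) p.1 * rowSum (A ^ (k + N)) p.2 /
          (rowSum (A ^ k) p.1 * rowSum (A ^ k) p.2)) ^ (((M : ℝ) + N))⁻¹) := by
      rintro s ⟨i, j, -, rfl⟩
      exact ⟨(i, j), rfl⟩
    have hSbddAbove : BddAbove S := ((Set.finite_range _).subset hSsub).bddAbove
    have hSbddBelow : BddBelow S := ⟨0, fun s hs => hSnonneg s hs⟩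
    have hSne : S.Nonempty := by
      obtain ⟨j0, hj0⟩ := exists_pos_entry hAM
        (ne_of_gt (rowSum_pow_pos hA hr M (Classical.arbitrary _)))
      exact ⟨_, Classical.arbitrary _, j0, hj0, rfl⟩
    -- forward direction, sup side
    have sup_forward : specRad A = sSup S → ∃ μ : ℝ, A *ᵥ x = μ • x := by
      intro hspec
      set β := sSup S with hβ
      have hβ0 : 0 ≤ β := by
        obtain ⟨s, hs⟩ := hSne
        exact le_trans (hSnonneg s hs) (le_csSup hSbddAbove hs)
      have hble : ∀ i, ((A ^ q) *ᵥ x) i ≤ β ^ q * x i := by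
        intro i
        have hterm : ∀ j, (A ^ M) i j * rowSum (A ^ (k + N)) j ≤
            (A ^ M) i j * (β ^ q * rowSum (A ^ k) i * rowSum (A ^ k) j /
              rowSum (A ^ (k + M)) i) := by
          intro j
          rcases (hAM i j).eq_or_lt with h0 | hpos
          · rw [← h0]; simp
          · have hmem : (rowSum (A ^ (k + M)) i * rowSum (A ^ (k + N)) j /
                (rowSum (A ^ k) i * rowSum (A ^ k) j)) ^ (((M : ℝ) + N))⁻¹ ∈ S := by
              rw [hSdef]; exact ⟨i, j, hpos, rfl⟩
            have hxij : 0 < rowSum (A ^ k) i * rowSum (A ^ k) j :=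
              mul_pos (rowSum_pow_pos hA hr k i) (rowSum_pow_pos hA hr k j)
            have hbase : 0 < rowSum (A ^ (k + M)) i * rowSum (A ^ (k + N)) j /
                (rowSum (A ^ k) i * rowSum (A ^ k) j) :=
              div_pos (mul_pos (hupos i) (hvpos j)) hxij
            have h1 := le_csSup hSbddAbove hmem
            rw [hcastq] at h1
            have h2 := rpow_val_le hbase hβ0 hq h1
            rw [div_le_iff₀ hxij] at h2
            have h3 : rowSum (A ^ (k + N)) j ≤
                β ^ q * rowSum (A ^ k) i * rowSum (A ^ k) j / rowSum (A ^ (k + M)) i := by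
              rw [le_div_iff₀ (hupos i)]
              nlinarith
            exact mul_le_mul_of_nonneg_left h3 (hAM i j)
        have hui : ∑ j, (A ^ M) i j * rowSum (A ^ k) j = rowSum (A ^ (k + M)) i := by
          rw [hu i]
          rfl
        calc ((A ^ q) *ᵥ x) i = ∑ j, (A ^ M) i j * rowSum (A ^ (k + N)) j := by
              rw [hBxv]
              show ∑ j, (A ^ M) i j * ((A ^ N) *ᵥ x) j = _
              exact Finset.sum_congr rfl fun j _ => by rw [hv j]
          _ ≤ ∑ j, (A ^ M) i j * (β ^ q * rowSum (A ^ k) i * rowSum (A ^ k) j /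
                rowSum (A ^ (k + M)) i) := Finset.sum_le_sum fun j _ => hterm j
          _ = (β ^ q * rowSum (A ^ k) i / rowSum (A ^ (k + M)) i) *
                ∑ j, (A ^ M) i j * rowSum (A ^ k) j := by
              rw [Finset.mul_sum]
              exact Finset.sum_congr rfl fun j _ => by ring
          _ = (β ^ q * rowSum (A ^ k) i / rowSum (A ^ (k + M)) i) *
                rowSum (A ^ (k + M)) i := by rw [hui]
          _ = β ^ q * rowSum (A ^ k) i := div_mul_cancel₀ _ (ne_of_gt (hupos i))
          _ = β ^ q * x i := rfl
      have hceq : specRad (A ^ q) = β ^ q := by rw [specRad_pow hn A q, hspec]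
      have hfix := fix_of_upper hn hBnn hirr hxpos hceq hble
      exact step6 hn hBnn hirr hcommAB hxpos hAxpos (pow_nonneg hβ0 q) hfix
    -- forward direction, inf side
    have inf_forward : specRad A = sInf S → ∃ μ : ℝ, A *ᵥ x = μ • x := by
      intro hspec
      set β := sInf S with hβ
      have hβ0 : 0 ≤ β := le_csInf hSne fun b hb => hSnonneg b hb
      have hble : ∀ i, β ^ q * x i ≤ ((A ^ q) *ᵥ x) i := by
        intro i
        have hterm : ∀ j, (A ^ M) i j * (β ^ q * rowSum (A ^ k) i * rowSum (A ^ k) j /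
              rowSum (A ^ (k + M)) i) ≤ (A ^ M) i j * rowSum (A ^ (k + N)) j := by
          intro j
          rcases (hAM i j).eq_or_lt with h0 | hpos
          · rw [← h0]; simp
          · have hmem : (rowSum (A ^ (k + M)) i * rowSum (A ^ (k + N)) j /
                (rowSum (A ^ k) i * rowSum (A ^ k) j)) ^ (((M : ℝ) + N))⁻¹ ∈ S := by
              rw [hSdef]; exact ⟨i, j, hpos, rfl⟩
            have hxij : 0 < rowSum (A ^ k) i * rowSum (A ^ k) j :=
              mul_pos (rowSum_pow_pos hA hr k i) (rowSum_pow_pos hA hr k j)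
            have hbase : 0 < rowSum (A ^ (k + M)) i * rowSum (A ^ (k + N)) j /
                (rowSum (A ^ k) i * rowSum (A ^ k) j) :=
              div_pos (mul_pos (hupos i) (hvpos j)) hxij
            have h1 := csInf_le hSbddBelow hmem
            rw [hcastq] at h1
            have h2 := rpow_val_ge hbase hβ0 hq h1
            rw [le_div_iff₀ hxij] at h2
            have h3 : β ^ q * rowSum (A ^ k) i * rowSum (A ^ k) j /
                rowSum (A ^ (k + M)) i ≤ rowSum (A ^ (k + N)) j := by
              rw [div_le_iff₀ (hupos i)]
              nlinarith
            exact mul_le_mul_of_nonneg_left h3 (hAM i j)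
        have hui : ∑ j, (A ^ M) i j * rowSum (A ^ k) j = rowSum (A ^ (k + M)) i := by
          rw [hu i]
          rfl
        calc β ^ q * x i = β ^ q * rowSum (A ^ k) i := rfl
          _ = (β ^ q * rowSum (A ^ k) i / rowSum (A ^ (k + M)) i) *
                rowSum (A ^ (k + M)) i := (div_mul_cancel₀ _ (ne_of_gt (hupos i))).symm
          _ = (β ^ q * rowSum (A ^ k) i / rowSum (A ^ (k + M)) i) *
                ∑ j, (A ^ M) i j * rowSum (A ^ k) j := by rw [hui]
          _ = ∑ j, (A ^ M) i j * (β ^ q * rowSum (A ^ k) i * rowSum (A ^ k) j /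
                rowSum (A ^ (k + M)) i) := by
              rw [Finset.mul_sum]
              exact Finset.sum_congr rfl fun j _ => by ring
          _ ≤ ∑ j, (A ^ M) i j * rowSum (A ^ (k + N)) j :=
              Finset.sum_le_sum fun j _ => hterm j
          _ = ((A ^ q) *ᵥ x) i := by
              rw [hBxv]
              show _ = ∑ j, (A ^ M) i j * ((A ^ N) *ᵥ x) j
              exact Finset.sum_congr rfl fun j _ => by rw [hv j]
      have hceq : specRad (A ^ q) = β ^ q := by rw [specRad_pow hn A q, hspec]
      have hfix := fix_of_lower hn hBnn hirr hxpos (pow_nonneg hβ0 q) hceq hble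
      exact step6 hn hBnn hirr hcommAB hxpos hAxpos (pow_nonneg hβ0 q) hfix
    -- backward direction
    have eigen_backward : (∃ μ : ℝ, A *ᵥ x = μ • x) →
        specRad A = sSup S ∧ specRad A = sInf S := by
      rintro ⟨μ, hμ⟩
      have hμpos : 0 < μ := by
        have h1 := hAxpos (Classical.arbitrary _)
        have h2 := congrFun hμ (Classical.arbitrary _)
        simp only [Pi.smul_apply, smul_eq_mul] at h2
        nlinarith [hxpos (Classical.arbitrary (Fin n))]
      have hAMx := pow_mulVec_eig hμ M
      have hANx := pow_mulVec_eig hμ N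
      have hval : ∀ i j : Fin n,
          (rowSum (A ^ (k + M)) i * rowSum (A ^ (k + N)) j /
            (rowSum (A ^ k) i * rowSum (A ^ k) j)) ^ (((M : ℝ) + N))⁻¹ = μ := by
        intro i j
        have h1 : rowSum (A ^ (k + M)) i = μ ^ M * x i := by
          rw [hu i, hAMx]
          simp
        have h2 : rowSum (A ^ (k + N)) j = μ ^ N * x j := by
          rw [hv j, hANx]
          simp
        have h3 : μ ^ M * x i * (μ ^ N * x j) / (x i * x j) = μ ^ q := by
          rw [hqdef, pow_add]
          field_simp [ne_of_gt (hxpos i), ne_of_gt (hxpos j)]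
        rw [h1, h2, hxk i, hxk j, h3, hcastq]
        exact rpow_val_eq hμpos hq
      have hSsing : S = {μ} := by
        apply Set.eq_singleton_iff_unique_mem.mpr
        constructor
        · obtain ⟨j0, hj0⟩ := exists_pos_entry hAM
            (ne_of_gt (rowSum_pow_pos hA hr M (Classical.arbitrary _)))
          rw [hSdef]
          exact ⟨Classical.arbitrary _, j0, hj0, (hval _ j0).symm⟩
        · rintro s ⟨i, j, -, rfl⟩
          exact hval i j
      have hspecμ : specRad A = μ := by
        apply le_antisymm
        · apply specRad_le_of_subinv hn hA hxpos
          intro i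
          have h2 := congrFun hμ i
          simp only [Pi.smul_apply, smul_eq_mul] at h2
          rw [h2]
        · have hmem := real_eigen_mem_spectrum hxne hμ
          have h1 := abs_le_specRad hmem
          rwa [Complex.norm_real, Real.norm_of_nonneg hμpos.le] at h1
      rw [hSsing]
      exact ⟨by rw [csSup_singleton]; exact hspecμ, by rw [csInf_singleton]; exact hspecμ⟩
    constructor
    · exact ⟨sup_forward, fun h => (eigen_backward h).1⟩
    · exact ⟨inf_forward, fun h => (eigen_backward h).2⟩
end

section
/- Let A = (a_{ij}) be an n×n nonnegative real matrix whose row sums r_1(A),…,r_n(A) are all nonzero, and let α be a real number with 0 ≤ α ≤ 1. Then min over pairs (i,j) with a_{ij} > 0 of r_i(A)^α · r_j(A)^{1−α} ≤ ρ(A) ≤ max over pairs (i,j) with a_{ij} > 0 of r_i(A)^α · r_j(A)^{1−α}. -/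
open Matrix

namespace Stmt8Aux

attribute [local instance] Matrix.linftyOpNormedRing Matrix.linftyOpNormedAlgebra

variable {n : ℕ}

lemma map_ofReal_pow (C : Matrix (Fin n) (Fin n) ℝ) (k : ℕ) :
    (C.map (fun x : ℝ => (x : ℂ))) ^ k = (C ^ k).map (fun x : ℝ => (x : ℂ)) := by
  have h : ∀ D : Matrix (Fin n) (Fin n) ℝ, D.map (fun x : ℝ => (x : ℂ)) =
      (RingHom.mapMatrix (algebraMap ℝ ℂ) : Matrix (Fin n) (Fin n) ℝ →+* _) D := fun D => rfl
  rw [h, h, ← map_pow]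

lemma pow_entry_nonneg {C : Matrix (Fin n) (Fin n) ℝ} (hC : ∀ i j, 0 ≤ C i j) (k : ℕ) :
    ∀ i j, 0 ≤ (C ^ k) i j := by
  induction k with
  | zero => intro i j; simp only [pow_zero, Matrix.one_apply]; positivity
  | succ k ih =>
      intro i j
      rw [pow_succ, Matrix.mul_apply]
      exact Finset.sum_nonneg fun l _ => mul_nonneg (ih i l) (hC l j)

lemma pow_rowsum_ge {C : Matrix (Fin n) (Fin n) ℝ} (hC : ∀ i j, 0 ≤ C i j) {m : ℝ}
    (hm : 0 ≤ m) (h : ∀ i, m ≤ ∑ j, C i j) (k : ℕ) :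
    ∀ i, m ^ k ≤ ∑ j, (C ^ k) i j := by
  induction k with
  | zero => intro i; simp [Matrix.one_apply]
  | succ k ih =>
      intro i
      have : C ^ (k + 1) = C * C ^ k := by rw [pow_succ']
      rw [this]
      have : ∑ j, (C * C ^ k) i j = ∑ l, C i l * ∑ j, (C ^ k) l j := by
        simp_rw [Matrix.mul_apply, Finset.mul_sum]
        rw [Finset.sum_comm]
      rw [this, pow_succ]
      calc m ^ k * m ≤ m ^ k * ∑ l, C i l := by
            have := h i
            nlinarith [pow_nonneg hm k]
        _ = ∑ l, C i l * m ^ k := by rw [Finset.mul_sum]; simp_rw [mul_comm]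
        _ ≤ ∑ l, C i l * ∑ j, (C ^ k) l j :=
            Finset.sum_le_sum fun l _ => mul_le_mul_of_nonneg_left (ih l) (hC i l)

lemma norm_map_le [NeZero n] {C : Matrix (Fin n) (Fin n) ℝ} (hC : ∀ i j, 0 ≤ C i j) {M : ℝ}
    (h : ∀ i, ∑ j, C i j ≤ M) : ‖C.map (fun x : ℝ => (x : ℂ))‖ ≤ M := by
  rw [Matrix.linfty_opNorm_def]
  have hM : 0 ≤ M := le_trans (Finset.sum_nonneg fun j _ => hC (Classical.arbitrary _) j)
    (h (Classical.arbitrary _))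
  have key : (Finset.univ.sup fun i => ∑ j, ‖(C.map (fun x : ℝ => (x : ℂ))) i j‖₊) ≤ ⟨M, hM⟩ := by
    apply Finset.sup_le
    intro i _
    have : ∀ j, ‖(C.map (fun x : ℝ => (x : ℂ))) i j‖₊ = (C i j).toNNReal := by
      intro j
      simp only [Matrix.map_apply]
      rw [Complex.nnnorm_real, Real.nnnorm_of_nonneg (hC i j)]
      exact NNReal.eq (by simp [Real.coe_toNNReal _ (hC i j)])
    simp_rw [this]
    refine NNReal.coe_le_coe.mp ?_
    push_cast
    calc ∑ j, ((C i j).toNNReal : ℝ) = ∑ j, C i j := by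
          apply Finset.sum_congr rfl; intro j _; exact Real.coe_toNNReal _ (hC i j)
      _ ≤ M := h i
  exact NNReal.coe_le_coe.mpr key

lemma le_norm_map [NeZero n] {C : Matrix (Fin n) (Fin n) ℝ} (hC : ∀ i j, 0 ≤ C i j) {c : ℝ}
    (h : ∀ i, c ≤ ∑ j, C i j) : c ≤ ‖C.map (fun x : ℝ => (x : ℂ))‖ := by
  set i0 : Fin n := Classical.arbitrary _
  calc c ≤ ∑ j, C i0 j := h i0
    _ = ((∑ j, ‖(C.map (fun x : ℝ => (x : ℂ))) i0 j‖₊ : NNReal) : ℝ) := by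
        push_cast
        apply Finset.sum_congr rfl
        intro j _
        simp only [Matrix.map_apply, coe_nnnorm, Complex.norm_real, Real.norm_eq_abs,
          abs_of_nonneg (hC i0 j)]
    _ ≤ ‖C.map (fun x : ℝ => (x : ℂ))‖ := by
        rw [Matrix.linfty_opNorm_def, NNReal.coe_le_coe]
        exact Finset.le_sup (f := fun i => ∑ j, ‖(C.map (fun x : ℝ => (x : ℂ))) i j‖₊) (Finset.mem_univ i0)


open Filter in
lemma specRad_bounds_aux [NeZero n] (C : Matrix (Fin n) (Fin n) ℝ)
    (hC : ∀ i j, 0 ≤ C i j) (m M : ℝ) (hm : 0 ≤ m)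
    (hlow : ∀ i, m ≤ ∑ j, C i j) (hup : ∀ i, ∑ j, C i j ≤ M) :
    m ≤ sSup ((fun μ : ℂ => ‖μ‖) '' spectrum ℂ (C.map (fun x : ℝ => (x : ℂ)))) ∧
    sSup ((fun μ : ℂ => ‖μ‖) '' spectrum ℂ (C.map (fun x : ℝ => (x : ℂ)))) ≤ M := by
  set B := C.map (fun x : ℝ => (x : ℂ)) with hB
  obtain ⟨z, hz, hzr⟩ := spectrum.exists_nnnorm_eq_spectralRadius (a := B)
  have hmax : ∀ μ ∈ spectrum ℂ B, ‖μ‖ ≤ ‖z‖ := by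
    intro μ hμ
    have h1 : (‖μ‖₊ : ENNReal) ≤ spectralRadius ℂ B := le_iSup₂ (f := fun k _ => (‖k‖₊ : ENNReal)) μ hμ
    rw [← hzr, ENNReal.coe_le_coe] at h1
    have h2 : ‖μ‖ ≤ ‖z‖ := NNReal.coe_le_coe.mpr h1
    exact h2
  have hsup : sSup ((fun μ : ℂ => ‖μ‖) '' spectrum ℂ B) = ‖z‖ := by
    apply IsGreatest.csSup_eq
    exact ⟨⟨z, hz, rfl⟩, by rintro y ⟨μ, hμ, rfl⟩; exact hmax μ hμ⟩
  rw [hsup]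
  constructor
  · -- lower bound via Gelfand's formula
    have hgel := spectrum.pow_nnnorm_pow_one_div_tendsto_nhds_spectralRadius (a := B)
    have hlim : ENNReal.ofReal m ≤ spectralRadius ℂ B := by
      refine ge_of_tendsto hgel ?_
      filter_upwards [eventually_ge_atTop 1] with k hk
      have h1 : m ^ k ≤ ‖B ^ k‖ := by
        rw [map_ofReal_pow]
        exact le_norm_map (pow_entry_nonneg hC k)
          (pow_rowsum_ge hC hm hlow k)
      have h2 : ENNReal.ofReal (m ^ k) ≤ (‖B ^ k‖₊ : ENNReal) := by
        rw [← enorm_eq_nnnorm, ← ofReal_norm]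
        exact ENNReal.ofReal_le_ofReal h1
      have h3 : (ENNReal.ofReal m) ^ k ≤ (‖B ^ k‖₊ : ENNReal) := by
        rwa [← ENNReal.ofReal_pow hm]
      calc ENNReal.ofReal m
          = ((ENNReal.ofReal m) ^ k) ^ (1 / k : ℝ) := by
            rw [← ENNReal.rpow_natCast, ← ENNReal.rpow_mul,
              mul_one_div_cancel (by positivity : (k : ℝ) ≠ 0), ENNReal.rpow_one]
        _ ≤ (‖B ^ k‖₊ : ENNReal) ^ (1 / k : ℝ) :=
            ENNReal.rpow_le_rpow h3 (by positivity)
    rw [← hzr] at hlim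
    have h4 : m ≤ ‖z‖ := by
      rw [← enorm_eq_nnnorm, ← ofReal_norm] at hlim
      exact (ENNReal.ofReal_le_ofReal_iff (norm_nonneg z)).mp hlim
    exact h4
  · calc ‖z‖ = ‖z‖ := rfl
      _ ≤ ‖B‖ := spectrum.norm_le_norm_of_mem hz
      _ ≤ M := norm_map_le hC hup


lemma key [NeZero n] (A : Matrix (Fin n) (Fin n) ℝ) (hA : ∀ i j, 0 ≤ A i j)
    (x : Fin n → ℝ) (hx : ∀ i, 0 < x i) (m M : ℝ) (hm : 0 ≤ m)
    (hlow : ∀ i, m * x i ≤ ∑ j, A i j * x j)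
    (hup : ∀ i, ∑ j, A i j * x j ≤ M * x i) :
    m ≤ specRad A ∧ specRad A ≤ M := by
  set C : Matrix (Fin n) (Fin n) ℝ := Matrix.of fun i j => (x i)⁻¹ * A i j * x j with hCdef
  have hC : ∀ i j, 0 ≤ C i j := fun i j =>
    mul_nonneg (mul_nonneg (inv_nonneg.mpr (hx i).le) (hA i j)) (hx j).le
  have hrow : ∀ i, ∑ j, C i j = (x i)⁻¹ * ∑ j, A i j * x j := by
    intro i
    rw [Finset.mul_sum]
    apply Finset.sum_congr rfl
    intro j _
    simp [hCdef, mul_assoc]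
  have hlow' : ∀ i, m ≤ ∑ j, C i j := by
    intro i
    rw [hrow i]
    calc m = (x i)⁻¹ * (m * x i) := by
          rw [mul_comm m (x i), ← mul_assoc, inv_mul_cancel₀ (hx i).ne', one_mul]
      _ ≤ (x i)⁻¹ * ∑ j, A i j * x j :=
        mul_le_mul_of_nonneg_left (hlow i) (inv_nonneg.mpr (hx i).le)
  have hup' : ∀ i, ∑ j, C i j ≤ M := by
    intro i
    rw [hrow i]
    calc (x i)⁻¹ * ∑ j, A i j * x j ≤ (x i)⁻¹ * (M * x i) :=
        mul_le_mul_of_nonneg_left (hup i) (inv_nonneg.mpr (hx i).le)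
      _ = M := by rw [mul_comm M (x i), ← mul_assoc, inv_mul_cancel₀ (hx i).ne', one_mul]
  -- conjugation
  set u : (Matrix (Fin n) (Fin n) ℂ)ˣ :=
    { val := Matrix.diagonal fun i => (x i : ℂ)
      inv := Matrix.diagonal fun i => (((x i)⁻¹ : ℝ) : ℂ)
      val_inv := by
        rw [Matrix.diagonal_mul_diagonal]
        convert Matrix.diagonal_one
        push_cast
        rw [mul_inv_cancel₀]
        exact_mod_cast (hx _).ne'
      inv_val := by
        rw [Matrix.diagonal_mul_diagonal]
        convert Matrix.diagonal_one
        push_cast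
        rw [inv_mul_cancel₀]
        exact_mod_cast (hx _).ne' } with hu
  have hconj : (↑u⁻¹ : Matrix (Fin n) (Fin n) ℂ) * (A.map (fun x : ℝ => (x : ℂ)))
        * (↑u : Matrix (Fin n) (Fin n) ℂ)
      = C.map (fun x : ℝ => (x : ℂ)) := by
    have hval : (↑u : Matrix (Fin n) (Fin n) ℂ) = Matrix.diagonal fun i => (x i : ℂ) := rfl
    have hinv : (↑u⁻¹ : Matrix (Fin n) (Fin n) ℂ)
        = Matrix.diagonal fun i => (((x i)⁻¹ : ℝ) : ℂ) := rfl
    rw [hval, hinv]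
    ext i j
    rw [Matrix.mul_diagonal, Matrix.diagonal_mul, Matrix.map_apply, Matrix.map_apply, hCdef]
    simp only [Matrix.of_apply]
    push_cast
    ring
  have hspec : spectrum ℂ (A.map (fun x : ℝ => (x : ℂ)))
      = spectrum ℂ (C.map (fun x : ℝ => (x : ℂ))) := by
    rw [← hconj]
    have h := spectrum.units_conjugate (R := ℂ) (a := A.map (fun x : ℝ => (x : ℂ))) (u := u⁻¹)
    rw [inv_inv] at h
    exact h.symm
  have := specRad_bounds_aux C hC m M hm hlow' hup'
  unfold specRad
  rw [hspec]
  exact this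

end Stmt8Aux

/-- Theorem 6 of the paper — Kolotilina's bound.
For a nonnegative matrix `A` with all row sums nonzero and `0 ≤ α ≤ 1`,
`min_{(i,j): a_{ij}>0} r_i(A)^α r_j(A)^{1-α} ≤ ρ(A) ≤ max_{(i,j): a_{ij}>0} r_i(A)^α r_j(A)^{1-α}`. -/
theorem stmt8 {n : ℕ} (A : Matrix (Fin n) (Fin n) ℝ)
    (hA : ∀ i j, 0 ≤ A i j) (hr : ∀ i, rowSum A i ≠ 0) (α : ℝ) (hα0 : 0 ≤ α) (hα1 : α ≤ 1) :
    sInf {x : ℝ | ∃ i j : Fin n, 0 < A i j ∧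
        x = rowSum A i ^ α * rowSum A j ^ (1 - α)} ≤ specRad A ∧
    specRad A ≤ sSup {x : ℝ | ∃ i j : Fin n, 0 < A i j ∧
        x = rowSum A i ^ α * rowSum A j ^ (1 - α)} := by
  rcases Nat.eq_zero_or_pos n with hn | hn
  · subst hn
    have hσ : spectrum ℂ (A.map (fun x : ℝ => (x : ℂ))) = ∅ := by
      ext μ
      simp [spectrum.mem_iff, isUnit_of_subsingleton]
    have hS : {x : ℝ | ∃ i j : Fin 0, 0 < A i j ∧
        x = rowSum A i ^ α * rowSum A j ^ (1 - α)} = ∅ := by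
      ext y
      simp
    rw [hS, specRad, hσ]
    simp [Real.sInf_empty, Real.sSup_empty]
  · haveI : NeZero n := ⟨hn.ne'⟩
    have hrpos : ∀ i, 0 < rowSum A i := fun i =>
      lt_of_le_of_ne (Finset.sum_nonneg fun j _ => hA i j) (Ne.symm (hr i))
    set S := {x : ℝ | ∃ i j : Fin n, 0 < A i j ∧
        x = rowSum A i ^ α * rowSum A j ^ (1 - α)} with hSdef
    have hSfin : S.Finite := by
      apply Set.Finite.subset (Set.finite_univ.image
        (fun p : Fin n × Fin n => rowSum A p.1 ^ α * rowSum A p.2 ^ (1 - α)))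
      rintro y ⟨i, j, _, h2⟩
      exact ⟨(i, j), trivial, h2.symm⟩
    have hSne : S.Nonempty := by
      set i0 : Fin n := Classical.arbitrary _
      have hj : ∃ j, A i0 j ≠ 0 := by
        by_contra h
        push_neg at h
        exact hr i0 (by simp [rowSum, h])
      obtain ⟨j, hj⟩ := hj
      exact ⟨_, i0, j, lt_of_le_of_ne (hA i0 j) (Ne.symm hj), rfl⟩
    have hmS : sInf S ∈ S := hSne.csInf_mem hSfin
    have hm0 : 0 < sInf S := by
      obtain ⟨i, j, _, h⟩ := hmS
      rw [h]
      have := hrpos i; have := hrpos j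
      positivity
    have hmle : ∀ y ∈ S, sInf S ≤ y := fun y hy => csInf_le hSfin.bddBelow hy
    have hleM : ∀ y ∈ S, y ≤ sSup S := fun y hy => le_csSup hSfin.bddAbove hy
    have hx : ∀ i, (0:ℝ) < rowSum A i ^ (1 - α) := fun i =>
      Real.rpow_pos_of_pos (hrpos i) _
    have hrx : ∀ i, rowSum A i / rowSum A i ^ α = rowSum A i ^ (1 - α) := by
      intro i
      rw [Real.rpow_sub (hrpos i), Real.rpow_one]
    have hup : ∀ i, ∑ j, A i j * rowSum A j ^ (1 - α) ≤ sSup S * rowSum A i ^ (1 - α) := by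
      intro i
      have hia : 0 < rowSum A i ^ α := Real.rpow_pos_of_pos (hrpos i) _
      calc ∑ j, A i j * rowSum A j ^ (1 - α)
          ≤ ∑ j, A i j * (sSup S / rowSum A i ^ α) := by
            apply Finset.sum_le_sum
            intro j _
            rcases eq_or_lt_of_le (hA i j) with h0 | h0
            · rw [← h0]; simp
            · apply mul_le_mul_of_nonneg_left _ (hA i j)
              have hmem : rowSum A i ^ α * rowSum A j ^ (1 - α) ∈ S := ⟨i, j, h0, rfl⟩
              have h1 := hleM _ hmem
              rw [le_div_iff₀ hia]
              linarith [h1]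
        _ = (∑ j, A i j) * (sSup S / rowSum A i ^ α) := by rw [Finset.sum_mul]
        _ = sSup S * (rowSum A i / rowSum A i ^ α) := by rw [rowSum]; ring
        _ = sSup S * rowSum A i ^ (1 - α) := by rw [hrx i]
    have hlow : ∀ i, sInf S * rowSum A i ^ (1 - α) ≤ ∑ j, A i j * rowSum A j ^ (1 - α) := by
      intro i
      have hia : 0 < rowSum A i ^ α := Real.rpow_pos_of_pos (hrpos i) _
      calc sInf S * rowSum A i ^ (1 - α)
          = sInf S * (rowSum A i / rowSum A i ^ α) := by rw [hrx i]
        _ = (∑ j, A i j) * (sInf S / rowSum A i ^ α) := by rw [rowSum]; ring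
        _ = ∑ j, A i j * (sInf S / rowSum A i ^ α) := by rw [Finset.sum_mul]
        _ ≤ ∑ j, A i j * rowSum A j ^ (1 - α) := by
            apply Finset.sum_le_sum
            intro j _
            rcases eq_or_lt_of_le (hA i j) with h0 | h0
            · rw [← h0]; simp
            · apply mul_le_mul_of_nonneg_left _ (hA i j)
              have hmem : rowSum A i ^ α * rowSum A j ^ (1 - α) ∈ S := ⟨i, j, h0, rfl⟩
              have h1 := hmle _ hmem
              rw [div_le_iff₀ hia]
              linarith [h1]
    exact Stmt8Aux.key A hA (fun i => rowSum A i ^ (1 - α)) hx (sInf S) (sSup S) hm0.le hlow hup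
end
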